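/- arXiv:2410.05967 — 8 statements merged into one kernel-verified Lean document; each statement's English description precedes it below -/
import Mathlib

section
/- Let A be a C*-algebra, D ⊂ A a commutative C*-subalgebra, and Φ : A → D a positive linear map. Then for every positive element a of A, the image under Φ of the hereditary C*-subalgebra generated by a is contained in the hereditary C*-subalgebra generated by Φ(a). -/
open scoped ComplexStarModule


/-- The hereditary C*-subalgebra of `A` generated by a positive element `a`,
as a set: the norm closure of `a A a`. -/
def herSet {A : Type*} [CStarAlgebra A] (a : A) : Set A :=
  closure {x : A | ∃ y : A, x = a * y * a}

section Aux

variable {A : Type*} [CStarAlgebra A] [PartialOrder A] [StarOrderedRing A]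

/-- The key hereditariness lemma: if `0 ≤ x ≤ b`, then `x` lies in the closure of `b A b`. -/
lemma mem_herSet_of_nonneg_of_le {b x : A} (hx : 0 ≤ x) (hxb : x ≤ b) : x ∈ herSet b := by
  have hb : 0 ≤ b := hx.trans hxb
  have hsp : ∀ t ∈ spectrum ℝ b, 0 ≤ t :=
    (StarOrderedRing.nonneg_iff_spectrum_nonneg (R := ℝ) b).mp hb
  set s : A := CFC.sqrt x with hs_def
  have hs_nonneg : 0 ≤ s := CFC.sqrt_nonneg (a := x)
  have hs_sa : IsSelfAdjoint s := IsSelfAdjoint.of_nonneg hs_nonneg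
  have hss : s * s = x := CFC.sqrt_mul_sqrt_self x hx
  have key : ∀ n : ℝ, 0 < n → ∃ z ∈ {x : A | ∃ y : A, x = b * y * b},
      ‖x - z‖ ≤ 2 * ‖s‖ * Real.sqrt (1 / n) := by
    intro n hn
    have hden : ∀ t ∈ spectrum ℝ b, (1 : ℝ) + n * t ≠ 0 := fun t ht => by
      have := hsp t ht; positivity
    have hcont_u : ContinuousOn (fun t : ℝ => (1 + n * t)⁻¹) (spectrum ℝ b) :=
      (ContinuousOn.inv₀ (by fun_prop) hden)
    have hcont_k : ContinuousOn (fun t : ℝ => n * (1 + n * t)⁻¹) (spectrum ℝ b) :=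
      continuousOn_const.mul hcont_u
    set w : A := cfc (fun t : ℝ => (1 + n * t)⁻¹) b with hw_def
    set K : A := cfc (fun t : ℝ => n * (1 + n * t)⁻¹) b with hK_def
    set g : A := cfc (fun t : ℝ => n * t * (1 + n * t)⁻¹) b with hg_def
    have hcont_g : ContinuousOn (fun t : ℝ => n * t * (1 + n * t)⁻¹) (spectrum ℝ b) :=
      (by fun_prop : ContinuousOn (fun t : ℝ => n * t) (spectrum ℝ b)).mul hcont_u
    have hgbK : g = b * K := by
      rw [hg_def, hK_def]
      nth_rw 2 [← cfc_id' ℝ b]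
      rw [← cfc_mul (fun t : ℝ => t) _ b (by fun_prop) hcont_k]
      exact cfc_congr fun t ht => by ring
    have hgKb : g = K * b := by
      rw [hg_def, hK_def]
      nth_rw 3 [← cfc_id' ℝ b]
      rw [← cfc_mul _ (fun t : ℝ => t) b hcont_k (by fun_prop)]
      exact cfc_congr fun t ht => by ring
    have hw_sa : IsSelfAdjoint w := cfc_predicate _ b
    have hg_sa : IsSelfAdjoint g := cfc_predicate _ b
    have hwg : w = 1 - g := by
      rw [hw_def, hg_def, ← cfc_one ℝ b, ← cfc_sub _ _ b (by fun_prop) hcont_g]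
      refine cfc_congr fun t ht => ?_
      have h := hden t ht
      simp only [Pi.one_apply]
      field_simp
      ring
    have hwbw : w * b * w = cfc (fun t : ℝ => (1 + n * t)⁻¹ * t * (1 + n * t)⁻¹) b := by
      rw [hw_def]
      nth_rw 2 [← cfc_id' ℝ b]
      rw [← cfc_mul _ (fun t : ℝ => t) b hcont_u (by fun_prop),
        ← cfc_mul (fun t : ℝ => (1 + n * t)⁻¹ * t) _ b (hcont_u.mul (by fun_prop)) hcont_u]
    have hwbw_norm : ‖w * b * w‖ ≤ 1 / n := by
      rw [hwbw]
      refine norm_cfc_le (by positivity) fun t ht => ?_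
      have ht0 := hsp t ht
      have hd : (0:ℝ) < 1 + n * t := by positivity
      rw [Real.norm_eq_abs, abs_of_nonneg (by positivity)]
      have e : (1 + n*t)⁻¹ * t * (1 + n*t)⁻¹ = t / (1 + n*t)^2 := by
        rw [eq_div_iff (by positivity : ((1:ℝ) + n*t)^2 ≠ 0), sq]
        field_simp
      rw [e, div_le_div_iff₀ (by positivity) hn]
      nlinarith [sq_nonneg (n*t), mul_nonneg hn.le ht0]
    have hwxw_le : w * x * w ≤ w * b * w := by
      have := star_left_conjugate_le_conjugate hxb w
      rwa [hw_sa.star_eq] at this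
    have hwxw_nonneg : 0 ≤ w * x * w := by
      have := star_left_conjugate_nonneg hx w
      rwa [hw_sa.star_eq] at this
    have hsw_norm : ‖s * w‖ ^ 2 ≤ 1 / n := by
      have hC : ‖s * w‖ * ‖s * w‖ = ‖star (s * w) * (s * w)‖ :=
        (CStarRing.norm_star_mul_self).symm
      have hstar : star (s * w) * (s * w) = w * x * w := by
        rw [star_mul, hw_sa.star_eq, hs_sa.star_eq, mul_assoc, ← mul_assoc s s w, hss,
          ← mul_assoc]
      rw [sq, hC, hstar]
      exact (CStarAlgebra.norm_le_norm_of_nonneg_of_le hwxw_nonneg hwxw_le).trans hwbw_norm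
    have hsw_norm' : ‖s * w‖ ≤ Real.sqrt (1 / n) := by
      rw [← Real.sqrt_sq (norm_nonneg (s * w))]
      exact Real.sqrt_le_sqrt hsw_norm
    have hws_norm : ‖w * s‖ ≤ Real.sqrt (1 / n) := by
      have : ‖w * s‖ = ‖s * w‖ := by
        rw [← norm_star (w * s), star_mul, hw_sa.star_eq, hs_sa.star_eq]
      rw [this]; exact hsw_norm'
    have hg_norm : ‖g‖ ≤ 1 := by
      rw [hg_def]
      refine norm_cfc_le one_pos.le fun t ht => ?_
      have ht0 := hsp t ht
      have hd : (0:ℝ) < 1 + n * t := by positivity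
      rw [Real.norm_eq_abs, abs_of_nonneg (by positivity), mul_inv_le_iff₀ hd]
      nlinarith
    refine ⟨g * x * g, ⟨K * x * K, by nth_rw 2 [hgKb]; rw [hgbK]; noncomm_ring⟩, ?_⟩
    have hdecomp : x - g * x * g = w * x + g * (x * w) := by
      rw [hwg]; noncomm_ring
    calc ‖x - g * x * g‖ = ‖w * x + g * (x * w)‖ := by rw [hdecomp]
      _ ≤ ‖w * x‖ + ‖g * (x * w)‖ := norm_add_le _ _
      _ ≤ ‖w * s‖ * ‖s‖ + ‖g‖ * (‖s‖ * ‖s * w‖) := by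
          gcongr
          · calc ‖w * x‖ = ‖w * s * s‖ := by rw [mul_assoc, hss]
              _ ≤ ‖w * s‖ * ‖s‖ := norm_mul_le _ _
          · calc ‖g * (x * w)‖ ≤ ‖g‖ * ‖x * w‖ := norm_mul_le _ _
              _ ≤ ‖g‖ * (‖s‖ * ‖s * w‖) := by
                  refine mul_le_mul_of_nonneg_left ?_ (norm_nonneg g)
                  calc ‖x * w‖ = ‖s * (s * w)‖ := by rw [← mul_assoc, hss]
                    _ ≤ ‖s‖ * ‖s * w‖ := norm_mul_le _ _
      _ ≤ Real.sqrt (1 / n) * ‖s‖ + 1 * (‖s‖ * Real.sqrt (1 / n)) := by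
          gcongr
      _ = 2 * ‖s‖ * Real.sqrt (1 / n) := by ring
  rw [herSet, Metric.mem_closure_iff]
  intro ε hε
  obtain ⟨n, hn, hlt⟩ : ∃ n : ℝ, 0 < n ∧ 2 * ‖s‖ * Real.sqrt (1 / n) < ε := by
    refine ⟨((2 * ‖s‖ + 1) / ε) ^ 2 + 1, by positivity, ?_⟩
    have h1 : Real.sqrt (1 / (((2 * ‖s‖ + 1) / ε) ^ 2 + 1)) < ε / (2 * ‖s‖ + 1) := by
      rw [Real.sqrt_lt' (by positivity)]
      have h2 : (ε / (2 * ‖s‖ + 1)) ^ 2 = 1 / (((2 * ‖s‖ + 1) / ε) ^ 2) := by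
        rw [one_div, ← inv_pow, inv_div]
      rw [h2]
      exact one_div_lt_one_div_of_lt (by positivity) (by linarith [sq_nonneg ((2 * ‖s‖ + 1) / ε)])
    calc 2 * ‖s‖ * Real.sqrt (1 / (((2 * ‖s‖ + 1) / ε) ^ 2 + 1))
        ≤ (2 * ‖s‖ + 1) * Real.sqrt (1 / (((2 * ‖s‖ + 1) / ε) ^ 2 + 1)) := by
          have := Real.sqrt_nonneg (1 / (((2 * ‖s‖ + 1) / ε) ^ 2 + 1)); nlinarith
      _ < (2 * ‖s‖ + 1) * (ε / (2 * ‖s‖ + 1)) := by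
          exact mul_lt_mul_of_pos_left h1 (by positivity)
      _ = ε := by field_simp
  obtain ⟨z, hz, hz2⟩ := key n hn
  exact ⟨z, hz, by rw [dist_eq_norm]; exact hz2.trans_lt hlt⟩

/-- `herSet b` is the coercion of a (closed) `ℂ`-submodule of `A`. -/
lemma herSet_eq_submodule (b : A) : ∃ S : Submodule ℂ A, (S : Set A) = herSet b ∧
    IsClosed (S : Set A) := by
  set L : A →ₗ[ℂ] A := (LinearMap.mulRight ℂ b).comp (LinearMap.mulLeft ℂ b) with hL
  have hrange : (LinearMap.range L : Set A) = {x : A | ∃ y : A, x = b * y * b} := by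
    ext z
    simp only [hL, SetLike.mem_coe, LinearMap.mem_range, LinearMap.coe_comp,
      Function.comp_apply, LinearMap.mulRight_apply, LinearMap.mulLeft_apply,
      Set.mem_setOf_eq]
    exact ⟨fun ⟨y, h⟩ => ⟨y, h.symm⟩, fun ⟨y, h⟩ => ⟨y, h.symm⟩⟩
  refine ⟨(LinearMap.range L).topologicalClosure, ?_, ?_⟩
  · rw [Submodule.topologicalClosure_coe, hrange, herSet]
  · rw [Submodule.topologicalClosure_coe]
    exact isClosed_closure

/-- A positive linear map is monotone. -/
lemma phi_mono (Φ : A →ₗ[ℂ] A) (hpos : ∀ x : A, 0 ≤ x → 0 ≤ Φ x) {p q : A} (h : p ≤ q) :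
    Φ p ≤ Φ q := by
  have := hpos (q - p) (sub_nonneg.mpr h)
  rw [map_sub] at this
  exact sub_nonneg.mp this

/-- A positive linear map is bounded. -/
lemma phi_bound [Nontrivial A] (Φ : A →ₗ[ℂ] A) (hpos : ∀ x : A, 0 ≤ x → 0 ≤ Φ x) (x : A) :
    ‖Φ x‖ ≤ 6 * ‖Φ 1‖ * ‖x‖ := by
  have hsa : ∀ s : A, IsSelfAdjoint s → ‖Φ s‖ ≤ 3 * ‖Φ 1‖ * ‖s‖ := by
    intro s hs
    have h1 : s ≤ ‖s‖ • (1 : A) := by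
      have := hs.le_algebraMap_norm_self
      rwa [Algebra.algebraMap_eq_smul_one] at this
    have h2 : -(‖s‖ • (1 : A)) ≤ s := by
      have := hs.neg_algebraMap_norm_le_self
      rwa [Algebra.algebraMap_eq_smul_one] at this
    have e1 : (0 : A) ≤ Φ s + ‖s‖ • Φ 1 := by
      have h0 : (0 : A) ≤ s + ‖s‖ • (1 : A) := by
        rw [← neg_add_cancel (‖s‖ • (1 : A))]
        exact add_le_add_left h2 _
      have := hpos _ h0
      rwa [map_add, Φ.map_smul_of_tower] at this
    have e2 : Φ s + ‖s‖ • Φ 1 ≤ (2 * ‖s‖) • Φ 1 := by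
      have h0 : s + ‖s‖ • (1 : A) ≤ (2 * ‖s‖) • (1 : A) := by
        have : s + ‖s‖ • (1 : A) ≤ ‖s‖ • (1 : A) + ‖s‖ • (1 : A) := add_le_add_left h1 _
        rwa [← add_smul, ← two_mul] at this
      have := phi_mono Φ hpos h0
      rwa [map_add, Φ.map_smul_of_tower, Φ.map_smul_of_tower] at this
    have e3 : ‖Φ s + ‖s‖ • Φ 1‖ ≤ 2 * ‖s‖ * ‖Φ 1‖ := by
      refine (CStarAlgebra.norm_le_norm_of_nonneg_of_le e1 e2).trans ?_
      rw [norm_smul, Real.norm_eq_abs, abs_of_nonneg (by positivity)]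
    calc ‖Φ s‖ = ‖(Φ s + ‖s‖ • Φ 1) - ‖s‖ • Φ 1‖ := by rw [add_sub_cancel_right]
      _ ≤ ‖Φ s + ‖s‖ • Φ 1‖ + ‖‖s‖ • Φ 1‖ := norm_sub_le _ _
      _ ≤ 2 * ‖s‖ * ‖Φ 1‖ + ‖s‖ * ‖Φ 1‖ := by
          gcongr
          rw [norm_smul, Real.norm_eq_abs, abs_of_nonneg (norm_nonneg s)]
      _ = 3 * ‖Φ 1‖ * ‖s‖ := by ring
  have hre : ‖(ℜ x : A)‖ ≤ ‖x‖ := by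
    rw [realPart_apply_coe, norm_smul, Real.norm_eq_abs]
    calc |(2:ℝ)⁻¹| * ‖x + star x‖ ≤ (2:ℝ)⁻¹ * (‖x‖ + ‖star x‖) := by
          rw [abs_of_nonneg (by norm_num)]
          gcongr
          exact norm_add_le _ _
      _ = ‖x‖ := by rw [norm_star]; ring
  have him : ‖(ℑ x : A)‖ ≤ ‖x‖ := by
    rw [imaginaryPart_apply_coe, norm_smul, norm_smul, norm_neg, Complex.norm_I, one_mul,
      Real.norm_eq_abs]
    calc |(2:ℝ)⁻¹| * ‖x - star x‖ ≤ (2:ℝ)⁻¹ * (‖x‖ + ‖star x‖) := by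
          rw [abs_of_nonneg (by norm_num)]
          gcongr
          exact norm_sub_le _ _
      _ = ‖x‖ := by rw [norm_star]; ring
  have hx : x = (ℜ x : A) + Complex.I • (ℑ x : A) := (realPart_add_I_smul_imaginaryPart x).symm
  calc ‖Φ x‖ = ‖Φ (ℜ x : A) + Complex.I • Φ (ℑ x : A)‖ := by
        nth_rw 1 [hx]; rw [map_add, map_smul]
    _ ≤ ‖Φ (ℜ x : A)‖ + ‖Complex.I • Φ (ℑ x : A)‖ := norm_add_le _ _
    _ = ‖Φ (ℜ x : A)‖ + ‖Φ (ℑ x : A)‖ := by rw [norm_smul, Complex.norm_I, one_mul]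
    _ ≤ 3 * ‖Φ 1‖ * ‖(ℜ x : A)‖ + 3 * ‖Φ 1‖ * ‖(ℑ x : A)‖ :=
        add_le_add (hsa _ (ℜ x).2) (hsa _ (ℑ x).2)
    _ ≤ 3 * ‖Φ 1‖ * ‖x‖ + 3 * ‖Φ 1‖ * ‖x‖ := by gcongr
    _ = 6 * ‖Φ 1‖ * ‖x‖ := by ring

/-- `a * a ≤ ‖a‖ • a` for positive `a`. -/
lemma sq_le_norm_smul [Nontrivial A] (a : A) (ha : 0 ≤ a) : a * a ≤ ‖a‖ • a := by
  have hsp : ∀ t ∈ spectrum ℝ a, 0 ≤ t :=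
    (StarOrderedRing.nonneg_iff_spectrum_nonneg (R := ℝ) a).mp ha
  have h1 : a * a = cfc (fun t : ℝ => t * t) a := by
    rw [cfc_mul _ _ a, cfc_id' ℝ a]
  have h2 : ‖a‖ • a = cfc (fun t : ℝ => ‖a‖ • t) a := by
    rw [cfc_smul _ _ a, cfc_id' ℝ a]
  rw [h1, h2]
  exact cfc_mono fun t ht => by
    have h0 := hsp t ht
    have := spectrum.norm_le_norm_of_mem ht
    rw [Real.norm_eq_abs, abs_of_nonneg h0] at this
    simpa [smul_eq_mul] using mul_le_mul_of_nonneg_right this h0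

end Aux

/-- If `D` is a commutative C*-subalgebra of `A` and `Φ : A → D` is a
positive linear map, then `Φ(her(a)) ⊆ her(Φ(a))` for every positive `a ∈ A`. -/
theorem stmt1 {A : Type*} [CStarAlgebra A] [PartialOrder A] [StarOrderedRing A]
    (D : StarSubalgebra ℂ A)
    (hcomm : ∀ x ∈ D, ∀ y ∈ D, x * y = y * x)
    (Φ : A →ₗ[ℂ] A)
    (hrange : ∀ x : A, Φ x ∈ D)
    (hpos : ∀ x : A, 0 ≤ x → 0 ≤ Φ x)
    (a : A) (ha : 0 ≤ a) :
    Φ '' (herSet a) ⊆ herSet (Φ a) := by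
  rintro _ ⟨x, hx, rfl⟩
  by_cases htriv : Subsingleton A
  · exact subset_closure ⟨0, Subsingleton.elim _ _⟩
  have : Nontrivial A := not_subsingleton_iff_nontrivial.mp htriv
  have ha_sa : IsSelfAdjoint a := IsSelfAdjoint.of_nonneg ha
  have hΦcont : Continuous Φ :=
    AddMonoidHomClass.continuous_of_bound Φ (6 * ‖Φ 1‖) (phi_bound Φ hpos)
  obtain ⟨S, hS, hSclosed⟩ := herSet_eq_submodule (Φ a)
  -- key step: for `0 ≤ y`, `Φ (a * y * a) ∈ S`
  have key : ∀ y : A, 0 ≤ y → Φ (a * y * a) ∈ S := by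
    intro y hy
    have hy_sa : IsSelfAdjoint y := IsSelfAdjoint.of_nonneg hy
    have h1 : 0 ≤ a * y * a := by
      have := star_left_conjugate_nonneg hy a
      rwa [ha_sa.star_eq] at this
    have h2 : a * y * a ≤ (‖y‖ * ‖a‖) • a := by
      have step1 : a * y * a ≤ ‖y‖ • (a * a) := by
        have := star_left_conjugate_le_conjugate hy_sa.le_algebraMap_norm_self a
        rw [ha_sa.star_eq, Algebra.algebraMap_eq_smul_one] at this
        calc a * y * a ≤ a * (‖y‖ • (1:A)) * a := this
          _ = ‖y‖ • (a * a) := by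
              rw [mul_smul_comm, mul_one, smul_mul_assoc]
      refine step1.trans ?_
      calc ‖y‖ • (a * a) ≤ ‖y‖ • (‖a‖ • a) :=
            smul_le_smul_of_nonneg_left (sq_le_norm_smul a ha) (norm_nonneg y)
        _ = (‖y‖ * ‖a‖) • a := by rw [smul_smul]
    have h3 : 0 ≤ Φ (a * y * a) := hpos _ h1
    have h4 : Φ (a * y * a) ≤ (‖y‖ * ‖a‖) • Φ a := by
      have := phi_mono Φ hpos h2
      rwa [Φ.map_smul_of_tower] at this
    set r : ℝ := ‖y‖ * ‖a‖ with hr_def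
    have hr0 : 0 ≤ r := mul_nonneg (norm_nonneg y) (norm_nonneg a)
    by_cases hr : r = 0
    · have hzero : Φ (a * y * a) = 0 := by
        refine le_antisymm ?_ h3
        rw [hr, zero_smul] at h4
        exact h4
      rw [hzero]
      exact S.zero_mem
    · have hr' : 0 < r := lt_of_le_of_ne hr0 (Ne.symm hr)
      have h5 : r⁻¹ • Φ (a * y * a) ≤ Φ a := by
        have := smul_le_smul_of_nonneg_left h4 (inv_nonneg.mpr hr'.le)
        rwa [smul_smul, inv_mul_cancel₀ hr, one_smul] at this
      have h6 : 0 ≤ r⁻¹ • Φ (a * y * a) := smul_nonneg (inv_nonneg.mpr hr'.le) h3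
      have h7 : r⁻¹ • Φ (a * y * a) ∈ herSet (Φ a) := mem_herSet_of_nonneg_of_le h6 h5
      rw [← hS] at h7
      have h8 := S.smul_mem ((r : ℂ)) h7
      have h9 : (r : ℂ) • (r⁻¹ • Φ (a * y * a)) = Φ (a * y * a) := by
        rw [Complex.coe_smul, smul_smul, mul_inv_cancel₀ hr, one_smul]
      rwa [h9] at h8
  -- all of `Φ(a A a)` lies in `S`
  have himg : Set.MapsTo Φ {z : A | ∃ y : A, z = a * y * a} (S : Set A) := by
    rintro _ ⟨y, rfl⟩
    have hy : y = (ℜ y : A) + Complex.I • (ℑ y : A) := (realPart_add_I_smul_imaginaryPart y).symm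
    have hre : (ℜ y : A) = (ℜ y : A)⁺ - (ℜ y : A)⁻ := (CFC.posPart_sub_negPart _ (ℜ y).2).symm
    have him : (ℑ y : A) = (ℑ y : A)⁺ - (ℑ y : A)⁻ := (CFC.posPart_sub_negPart _ (ℑ y).2).symm
    have e : Φ (a * y * a) = (Φ (a * (ℜ y : A)⁺ * a) - Φ (a * (ℜ y : A)⁻ * a))
        + Complex.I • (Φ (a * (ℑ y : A)⁺ * a) - Φ (a * (ℑ y : A)⁻ * a)) := by
      rw [← map_sub, ← map_sub, ← map_smul, ← map_add]
      congr 1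
      nth_rw 1 [hy, hre, him]
      simp only [mul_add, add_mul, mul_sub, sub_mul, mul_smul_comm, smul_mul_assoc, smul_sub]
    rw [e]
    exact S.add_mem
      (S.sub_mem (key _ (CFC.posPart_nonneg _)) (key _ (CFC.negPart_nonneg _)))
      (S.smul_mem _ (S.sub_mem (key _ (CFC.posPart_nonneg _)) (key _ (CFC.negPart_nonneg _))))
  -- conclude by continuity
  have hclos : Φ x ∈ closure (S : Set A) := map_mem_closure hΦcont hx himg
  rw [hSclosed.closure_eq, hS] at hclos
  exact hclos
end

section
/- Let A be a C*-algebra and let a, b be positive elements of A and x ∈ A. If xx* lies in the hereditary C*-subalgebra generated by a and x*x lies in the hereditary C*-subalgebra generated by b, then x lies in the closed subspace aAb (the closure of {a y b : y ∈ A}). -/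
section Aux

variable {A : Type*} [CStarAlgebra A] [PartialOrder A] [StarOrderedRing A]

lemma herAux_cont1 {h : A} (hh : 0 ≤ h) {ε : ℝ} (hε : 0 < ε) :
    ContinuousOn (fun t : ℝ => t / (t + ε)) (spectrum ℝ h) := by
  apply ContinuousOn.div continuousOn_id (by fun_prop)
  intro t ht
  have := spectrum_nonneg_of_nonneg hh ht
  positivity

lemma herAux_cont2 {h : A} (hh : 0 ≤ h) {ε : ℝ} (hε : 0 < ε) :
    ContinuousOn (fun t : ℝ => ε / (t + ε)) (spectrum ℝ h) := by
  apply ContinuousOn.div continuousOn_const (by fun_prop)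
  intro t ht
  have := spectrum_nonneg_of_nonneg hh ht
  positivity

lemma herAux_cont3 {h : A} (hh : 0 ≤ h) {ε : ℝ} (hε : 0 < ε) :
    ContinuousOn (fun t : ℝ => (t + ε)⁻¹) (spectrum ℝ h) := by
  apply ContinuousOn.inv₀ (by fun_prop)
  intro t ht
  have := spectrum_nonneg_of_nonneg hh ht
  positivity

/-- `1 - u = cfc (ε/(t+ε)) h`. -/
lemma herAux_one_sub {h : A} (hh : 0 ≤ h) {ε : ℝ} (hε : 0 < ε) :
    (1 : A) - cfc (fun t : ℝ => t / (t + ε)) h = cfc (fun t : ℝ => ε / (t + ε)) h := by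
  have hsa : IsSelfAdjoint h := hh.isSelfAdjoint
  have hsum : cfc (fun t : ℝ => t / (t + ε)) h + cfc (fun t : ℝ => ε / (t + ε)) h = 1 := by
    rw [← cfc_add (a := h) _ _ (herAux_cont1 hh hε) (herAux_cont2 hh hε)]
    rw [show (1 : A) = cfc (1 : ℝ → ℝ) h from (cfc_one ℝ h hsa).symm]
    apply cfc_congr
    intro t ht
    have ht0 := spectrum_nonneg_of_nonneg hh ht
    have : t + ε ≠ 0 := by positivity
    field_simp
    rfl
  rw [← hsum, add_sub_cancel_left]

/-- The key norm estimate: `‖(1-u) h (1-u)‖ ≤ ε`. -/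
lemma herAux_est {h : A} (hh : 0 ≤ h) {ε : ℝ} (hε : 0 < ε) :
    ‖((1 : A) - cfc (fun t : ℝ => t / (t + ε)) h) * h *
      ((1 : A) - cfc (fun t : ℝ => t / (t + ε)) h)‖ ≤ ε := by
  have hsa : IsSelfAdjoint h := hh.isSelfAdjoint
  rw [herAux_one_sub hh hε]
  have : cfc (fun t : ℝ => ε / (t + ε)) h * h * cfc (fun t : ℝ => ε / (t + ε)) h
      = cfc (fun t : ℝ => (ε / (t + ε) * t) * (ε / (t + ε))) h := by
    rw [cfc_mul (fun t : ℝ => ε / (t + ε) * t) (fun t : ℝ => ε / (t + ε)) h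
        ((herAux_cont2 hh hε).mul continuousOn_id) (herAux_cont2 hh hε),
      cfc_mul (fun t : ℝ => ε / (t + ε)) (fun t : ℝ => t) h (herAux_cont2 hh hε) continuousOn_id,
      cfc_id' ℝ h hsa]
  rw [this]
  apply norm_cfc_le hε.le
  intro t ht
  have ht0 := spectrum_nonneg_of_nonneg hh ht
  have hd : (0:ℝ) < t + ε := by positivity
  rw [Real.norm_eq_abs, abs_of_nonneg (by positivity)]
  rw [div_mul_eq_mul_div, div_mul_div_comm, div_le_iff₀ (by positivity)]
  nlinarith [mul_nonneg ht0 hε.le, sq_nonneg t, mul_pos hε hε, mul_nonneg (mul_nonneg ht0 ht0) hε.le]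

lemma herAux_norm_le_one {h : A} (hh : 0 ≤ h) {ε : ℝ} (hε : 0 < ε) :
    ‖cfc (fun t : ℝ => t / (t + ε)) h‖ ≤ 1 := by
  apply norm_cfc_le zero_le_one
  intro t ht
  have ht0 := spectrum_nonneg_of_nonneg hh ht
  rw [Real.norm_eq_abs, abs_of_nonneg (by positivity)]
  rw [div_le_one (by positivity)]
  linarith

end Aux

section Aux2

variable {A : Type*} [CStarAlgebra A] [PartialOrder A] [StarOrderedRing A]

lemma herAux_memL {a h : A} (hh : 0 ≤ h) {ε : ℝ} (hε : 0 < ε)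
    (hmem : h ∈ closure {z : A | ∃ y : A, z = a * y * a}) :
    cfc (fun t : ℝ => t / (t + ε)) h ∈ closure {z : A | ∃ y : A, z = a * y} := by
  have hsa : IsSelfAdjoint h := hh.isSelfAdjoint
  have hu : cfc (fun t : ℝ => t / (t + ε)) h = h * cfc (fun t : ℝ => (t + ε)⁻¹) h := by
    calc cfc (fun t : ℝ => t / (t + ε)) h = cfc (fun t : ℝ => t * (t + ε)⁻¹) h := by
          apply cfc_congr; intro t _; simp [div_eq_mul_inv]
      _ = cfc (fun t : ℝ => t) h * cfc (fun t : ℝ => (t + ε)⁻¹) h :=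
          cfc_mul (fun t : ℝ => t) (fun t : ℝ => (t + ε)⁻¹) h continuousOn_id (herAux_cont3 hh hε)
      _ = h * cfc (fun t : ℝ => (t + ε)⁻¹) h := by rw [cfc_id' ℝ h hsa]
  rw [hu]
  refine map_mem_closure (f := fun w : A => w * cfc (fun t : ℝ => (t + ε)⁻¹) h)
    (continuous_mul_right _) hmem ?_
  rintro _ ⟨y, rfl⟩
  exact ⟨y * a * cfc (fun t : ℝ => (t + ε)⁻¹) h, by simp [mul_assoc]⟩

lemma herAux_memR {b k : A} (hk : 0 ≤ k) {ε : ℝ} (hε : 0 < ε)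
    (hmem : k ∈ closure {z : A | ∃ y : A, z = b * y * b}) :
    cfc (fun t : ℝ => t / (t + ε)) k ∈ closure {z : A | ∃ y : A, z = y * b} := by
  have hsa : IsSelfAdjoint k := hk.isSelfAdjoint
  have hu : cfc (fun t : ℝ => t / (t + ε)) k = cfc (fun t : ℝ => (t + ε)⁻¹) k * k := by
    calc cfc (fun t : ℝ => t / (t + ε)) k = cfc (fun t : ℝ => (t + ε)⁻¹ * t) k := by
          apply cfc_congr; intro t _; simp [div_eq_mul_inv, mul_comm]
      _ = cfc (fun t : ℝ => (t + ε)⁻¹) k * cfc (fun t : ℝ => t) k :=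
          cfc_mul (fun t : ℝ => (t + ε)⁻¹) (fun t : ℝ => t) k (herAux_cont3 hk hε) continuousOn_id
      _ = cfc (fun t : ℝ => (t + ε)⁻¹) k * k := by rw [cfc_id' ℝ k hsa]
  rw [hu]
  refine map_mem_closure (f := fun w : A => cfc (fun t : ℝ => (t + ε)⁻¹) k * w)
    (continuous_mul_left _) hmem ?_
  rintro _ ⟨y, rfl⟩
  exact ⟨cfc (fun t : ℝ => (t + ε)⁻¹) k * (b * y), by simp [mul_assoc]⟩

end Aux2

theorem stmt3' {A : Type*} [CStarAlgebra A] [PartialOrder A] [StarOrderedRing A]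
    (a b : A) (ha : 0 ≤ a) (hb : 0 ≤ b) (x : A)
    (hx1 : x * star x ∈ closure {z : A | ∃ y : A, z = a * y * a})
    (hx2 : star x * x ∈ closure {z : A | ∃ y : A, z = b * y * b}) :
    x ∈ closure {z : A | ∃ y : A, z = a * y * b} := by
  set S := {z : A | ∃ y : A, z = a * y * b} with hS
  rw [← closure_closure (s := S), Metric.mem_closure_iff]
  intro δ hδ
  set ε := (δ / 3) ^ 2 with hεdef
  have hε : 0 < ε := by positivity
  set h := x * star x with hhdef
  set k := star x * x with hkdef
  have hh : 0 ≤ h := mul_star_self_nonneg x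
  have hk : 0 ≤ k := star_mul_self_nonneg x
  set u := cfc (fun t : ℝ => t / (t + ε)) h with hu
  set v := cfc (fun t : ℝ => t / (t + ε)) k with hv
  have hsu : IsSelfAdjoint u := cfc_predicate _ h
  have hsv : IsSelfAdjoint v := cfc_predicate _ k
  have hxmem : u * x * v ∈ closure S := by
    have h1 : u * x ∈ closure {z : A | ∃ y : A, z = a * y} := by
      refine map_mem_closure (f := fun w : A => w * x) (continuous_mul_right x) (herAux_memL hh hε hx1) ?_
      rintro _ ⟨y, rfl⟩
      exact ⟨y * x, by simp [mul_assoc]⟩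
    have h2 : Set.MapsTo (fun w : A => w * v) {z : A | ∃ y : A, z = a * y} (closure S) := by
      rintro _ ⟨y, rfl⟩
      refine map_mem_closure (f := fun w : A => a * y * w) (continuous_mul_left _) (herAux_memR hk hε hx2) ?_
      rintro _ ⟨y', rfl⟩
      exact show a * y * (y' * b) ∈ S from ⟨y * y', by simp [mul_assoc]⟩
    have := map_mem_closure (f := fun w : A => w * v) (continuous_mul_right v) h1 h2
    rwa [closure_closure] at this
  refine ⟨u * x * v, hxmem, ?_⟩
  have hbd1 : ‖x - u * x‖ ≤ δ / 3 := by
    have e : x - u * x = (1 - u) * x := by noncomm_ring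
    have star_e : star ((1 : A) - u) = 1 - u := (IsSelfAdjoint.one (R := A)).sub hsu
    have hn : ‖(1 - u) * x‖ * ‖(1 - u) * x‖ ≤ ε := by
      calc ‖(1 - u) * x‖ * ‖(1 - u) * x‖ = ‖((1 - u) * x) * star ((1 - u) * x)‖ :=
            (CStarRing.norm_self_mul_star).symm
        _ = ‖(1 - u) * h * (1 - u)‖ := by
            rw [star_mul, star_e, hhdef]; congr 1; noncomm_ring
        _ ≤ ε := herAux_est hh hε
    rw [e]
    nlinarith [norm_nonneg ((1 - u) * x), hδ]
  have hbd2 : ‖x - x * v‖ ≤ δ / 3 := by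
    have e : x - x * v = x * (1 - v) := by noncomm_ring
    have star_e : star ((1 : A) - v) = 1 - v := (IsSelfAdjoint.one (R := A)).sub hsv
    have hn : ‖x * (1 - v)‖ * ‖x * (1 - v)‖ ≤ ε := by
      calc ‖x * (1 - v)‖ * ‖x * (1 - v)‖ = ‖star (x * (1 - v)) * (x * (1 - v))‖ :=
            (CStarRing.norm_star_mul_self).symm
        _ = ‖(1 - v) * k * (1 - v)‖ := by
            rw [star_mul, star_e, hkdef]; congr 1; noncomm_ring
        _ ≤ ε := herAux_est hk hε
    rw [e]
    nlinarith [norm_nonneg (x * (1 - v)), hδ]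
  have hnu : ‖u‖ ≤ 1 := herAux_norm_le_one hh hε
  calc dist x (u * x * v) = ‖x - u * x * v‖ := dist_eq_norm _ _
    _ ≤ ‖x - u * x‖ + ‖u * x - u * x * v‖ := by
        rw [show x - u * x * v = (x - u * x) + (u * x - u * x * v) by abel]
        exact norm_add_le _ _
    _ ≤ δ / 3 + ‖u‖ * ‖x - x * v‖ := by
        refine add_le_add hbd1 ?_
        rw [show u * x - u * x * v = u * (x - x * v) by noncomm_ring]
        exact norm_mul_le _ _
    _ ≤ δ / 3 + 1 * (δ / 3) := by
        refine add_le_add le_rfl ?_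
        exact mul_le_mul hnu hbd2 (norm_nonneg _) zero_le_one
    _ < δ := by linarith


/-- If `xx* ∈ her(a)` and `x*x ∈ her(b)` for positive `a, b`, then
`x` lies in the norm closure of `a A b`. -/
theorem stmt3 {A : Type*} [CStarAlgebra A] [PartialOrder A] [StarOrderedRing A]
    (a b : A) (ha : 0 ≤ a) (hb : 0 ≤ b) (x : A)
    (hx1 : x * star x ∈ herSet a) (hx2 : star x * x ∈ herSet b) :
    x ∈ closure {z : A | ∃ y : A, z = a * y * b} :=
  stmt3' a b ha hb x hx1 hx2
end

section
/- Let A be a C*-algebra and a ∈ A a positive element. Then a is invertible in the hereditary C*-subalgebra her(a) generated by a if and only if 0 is an isolated point of the set {0} ∪ spectrum(a). -/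
section Aux

variable {A : Type*} [CStarAlgebra A]

/-- If `f t = t * k t * t` globally, then `cfc f a = a * cfc k a * a`. -/
lemma cfc_eq_conj (a : A) (hsa : IsSelfAdjoint a) (f k : ℝ → ℝ) (hk : Continuous k)
    (hfk : ∀ t, t * k t * t = f t) : cfc f a = a * cfc k a * a := by
  have h1 : cfc (fun t : ℝ => t * k t * t) a
      = cfc (fun t : ℝ => t * k t) a * cfc (fun t : ℝ => t) a :=
    cfc_mul _ _ a ((continuous_id.mul hk).continuousOn) continuous_id.continuousOn
  have h2 : cfc (fun t : ℝ => t * k t) a = cfc (fun t : ℝ => t) a * cfc k a :=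
    cfc_mul _ _ a continuous_id.continuousOn hk.continuousOn
  have h3 : cfc (fun t : ℝ => t) a = a := cfc_id' ℝ a hsa
  calc cfc f a = cfc (fun t : ℝ => t * k t * t) a := cfc_congr fun t _ => (hfk t).symm
    _ = a * cfc k a * a := by rw [h1, h2, h3]

lemma cfc_mem_herSet (a : A) (hsa : IsSelfAdjoint a) (f k : ℝ → ℝ) (hk : Continuous k)
    (hfk : ∀ t, t * k t * t = f t) : cfc f a ∈ herSet a := by
  rw [cfc_eq_conj a hsa f k hk hfk]
  exact subset_closure ⟨cfc k a, rfl⟩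

lemma mul_cfc_eq (a : A) (hsa : IsSelfAdjoint a) (f g : ℝ → ℝ) (hg : Continuous g)
    (h : ∀ t, t * g t = f t) : a * cfc g a = cfc f a := by
  have h1 : cfc (fun t : ℝ => t * g t) a = cfc (fun t : ℝ => t) a * cfc g a :=
    cfc_mul _ _ a continuous_id.continuousOn hg.continuousOn
  have h3 : cfc (fun t : ℝ => t) a = a := cfc_id' ℝ a hsa
  calc a * cfc g a = cfc (fun t : ℝ => t * g t) a := by rw [h1, h3]
    _ = cfc f a := cfc_congr fun t _ => h t

lemma cfc_mul_eq (a : A) (hsa : IsSelfAdjoint a) (f g : ℝ → ℝ) (hg : Continuous g)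
    (h : ∀ t, g t * t = f t) : cfc g a * a = cfc f a := by
  have h1 : cfc (fun t : ℝ => g t * t) a = cfc g a * cfc (fun t : ℝ => t) a :=
    cfc_mul _ _ a hg.continuousOn continuous_id.continuousOn
  have h3 : cfc (fun t : ℝ => t) a = a := cfc_id' ℝ a hsa
  calc cfc g a * a = cfc (fun t : ℝ => g t * t) a := by rw [h1, h3]
    _ = cfc f a := cfc_congr fun t _ => h t

end Aux

/-- A positive element `a` is invertible in the hereditary subalgebra
`her(a)` it generates (i.e. `her(a)` has a unit `e` and there is `b ∈ her(a)` with
`a * b = b * a = e`) if and only if `0` is an isolated point of `{0} ∪ spectrum(a)`. -/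
theorem stmt4 {A : Type*} [CStarAlgebra A] [PartialOrder A] [StarOrderedRing A]
    (a : A) (ha : 0 ≤ a) :
    (∃ e ∈ herSet a, (∀ c ∈ herSet a, e * c = c ∧ c * e = c) ∧
      ∃ b ∈ herSet a, a * b = e ∧ b * a = e) ↔
    (∃ U : Set ℝ, IsOpen U ∧ U ∩ ({0} ∪ spectrum ℝ a) = {0}) := by
  have hsa : IsSelfAdjoint a := IsSelfAdjoint.of_nonneg ha
  constructor
  · -- invertible in her(a) → 0 isolated
    rintro ⟨e, he, hunit, b, hb, hab, hba⟩
    set ε : ℝ := 2 / (3 * (‖b‖ + 1)) with hε_def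
    have hbpos : (0:ℝ) < ‖b‖ + 1 := by positivity
    have hε : 0 < ε := by positivity
    have claim : ∀ t ∈ spectrum ℝ a, t ∉ Set.Ioo 0 ε := by
      rintro t₀ ht₀ ⟨ht₀pos, ht₀lt⟩
      have hnt : Nontrivial A := by
        rcases subsingleton_or_nontrivial A with h | h
        · exact absurd ht₀ (by simp [spectrum.mem_iff, isUnit_of_subsingleton])
        · exact h
      set f : ℝ → ℝ := fun s => max (1 - |s - t₀| * (2 / t₀)) 0 with hf_def
      have hfc : Continuous f := by
        apply Continuous.max _ continuous_const
        fun_prop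
      have hf_nonneg : ∀ s, 0 ≤ f s := fun s => le_max_right _ _
      have hf_le_one : ∀ s, f s ≤ 1 := by
        intro s
        apply max_le _ zero_le_one
        have : 0 ≤ |s - t₀| * (2 / t₀) := by positivity
        linarith
      have hf_t₀ : f t₀ = 1 := by simp [hf_def]
      have hf0 : ∀ s, s ≤ t₀ / 2 → f s = 0 := by
        intro s hs
        apply max_eq_right
        have h1 : t₀ / 2 ≤ |s - t₀| := by
          rw [abs_sub_comm, abs_of_nonneg (by linarith)]; linarith
        have h2 : (1:ℝ) ≤ |s - t₀| * (2 / t₀) := by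
          have := mul_le_mul_of_nonneg_right h1 (le_of_lt (by positivity : (0:ℝ) < 2 / t₀))
          calc (1:ℝ) = t₀ / 2 * (2 / t₀) := by field_simp
            _ ≤ |s - t₀| * (2 / t₀) := this
        linarith
      have hf0' : ∀ s, 3 * t₀ / 2 ≤ s → f s = 0 := by
        intro s hs
        apply max_eq_right
        have h1 : t₀ / 2 ≤ |s - t₀| := by
          rw [abs_of_nonneg (by linarith)]; linarith
        have h2 : (1:ℝ) ≤ |s - t₀| * (2 / t₀) := by
          have := mul_le_mul_of_nonneg_right h1 (le_of_lt (by positivity : (0:ℝ) < 2 / t₀))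
          calc (1:ℝ) = t₀ / 2 * (2 / t₀) := by field_simp
            _ ≤ |s - t₀| * (2 / t₀) := this
        linarith
      set x : A := cfc f a with hx_def
      -- x ∈ herSet a
      have hx_mem : x ∈ herSet a := by
        apply cfc_mem_herSet a hsa f (fun s => f s / max s (t₀ / 2) ^ 2)
        · apply hfc.div
          · fun_prop
          · intro s
            have : 0 < max s (t₀ / 2) := lt_of_lt_of_le (by linarith) (le_max_right _ _)
            positivity
        · intro t
          rcases le_or_gt t (t₀ / 2) with h | h
          · rw [hf0 t h]; simp
          · rw [max_eq_left h.le]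
            have ht : t ≠ 0 := by intro h0; rw [h0] at h; linarith
            field_simp
      -- 1 ∈ spectrum x
      have hx1 : (1:ℝ) ∈ spectrum ℝ x := by
        rw [hx_def, cfc_map_spectrum (ha := hsa) (hf := hfc.continuousOn)]
        exact ⟨t₀, ht₀, hf_t₀⟩
      have hnorm : (1:ℝ) ≤ ‖x‖ := by
        simpa using spectrum.norm_le_norm_of_mem hx1
      -- ‖x * a‖ ≤ 3 * t₀ / 2
      have hxa : x * a = cfc (fun s => f s * s) a :=
        cfc_mul_eq a hsa (fun s => f s * s) f hfc fun t => rfl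
      have hxa_norm : ‖x * a‖ ≤ 3 * t₀ / 2 := by
        rw [hxa]
        apply norm_cfc_le (by positivity)
        intro s hs
        have hs0 : 0 ≤ s := spectrum_nonneg_of_nonneg ha hs
        rcases le_or_gt (3 * t₀ / 2) s with h | h
        · rw [hf0' s h]; simp; positivity
        · rw [Real.norm_eq_abs, abs_of_nonneg (mul_nonneg (hf_nonneg s) hs0)]
          calc f s * s ≤ 1 * s := mul_le_mul_of_nonneg_right (hf_le_one s) hs0
            _ = s := one_mul s
            _ ≤ 3 * t₀ / 2 := h.le
      -- derive contradiction
      have hxe : x * e = x := (hunit x hx_mem).2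
      have : (1:ℝ) ≤ 3 * t₀ / 2 * ‖b‖ := by
        calc (1:ℝ) ≤ ‖x‖ := hnorm
          _ = ‖x * e‖ := by rw [hxe]
          _ = ‖x * a * b‖ := by rw [← hab, mul_assoc]
          _ ≤ ‖x * a‖ * ‖b‖ := norm_mul_le _ _
          _ ≤ 3 * t₀ / 2 * ‖b‖ :=
            mul_le_mul_of_nonneg_right hxa_norm (norm_nonneg b)
      have hblt : 3 * t₀ / 2 * ‖b‖ < 1 := by
        have h1 : 3 * t₀ / 2 * ‖b‖ ≤ 3 * t₀ / 2 * (‖b‖ + 1) :=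
          mul_le_mul_of_nonneg_left (by linarith) (by positivity)
        have h2 : 3 * t₀ / 2 * (‖b‖ + 1) < 3 * ε / 2 * (‖b‖ + 1) := by
          apply mul_lt_mul_of_pos_right _ hbpos
          linarith
        have h3 : 3 * ε / 2 * (‖b‖ + 1) = 1 := by
          rw [hε_def]; field_simp
        linarith
      linarith
    refine ⟨Set.Ioo (-ε) ε, isOpen_Ioo, ?_⟩
    ext s
    simp only [Set.mem_inter_iff, Set.mem_Ioo, Set.mem_union, Set.mem_singleton_iff]
    constructor
    · rintro ⟨⟨hs1, hs2⟩, hs3 | hs3⟩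
      · exact hs3
      · have h0 : 0 ≤ s := spectrum_nonneg_of_nonneg ha hs3
        have := claim s hs3
        by_contra hne
        exact this ⟨lt_of_le_of_ne h0 (Ne.symm hne), hs2⟩
    · rintro rfl
      exact ⟨⟨by linarith, hε⟩, Or.inl rfl⟩
  · -- 0 isolated → invertible in her(a)
    rintro ⟨U, hU, hU0⟩
    have h0U : (0:ℝ) ∈ U := by
      have : (0:ℝ) ∈ U ∩ ({0} ∪ spectrum ℝ a) := by rw [hU0]; rfl
      exact this.1
    obtain ⟨ε, hε, hball⟩ := Metric.isOpen_iff.mp hU 0 h0U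
    have hσ : ∀ t ∈ spectrum ℝ a, t ∉ Set.Ioo 0 ε := by
      rintro t ht ⟨h1, h2⟩
      have htU : t ∈ U := hball (by simp [Real.dist_eq, abs_of_pos h1, h2])
      have : t ∈ U ∩ ({0} ∪ spectrum ℝ a) := ⟨htU, Or.inr ht⟩
      rw [hU0] at this
      simp only [Set.mem_singleton_iff] at this
      exact absurd this (ne_of_gt h1)
    -- the bump functions
    set m : ℝ → ℝ := fun t => max t (ε / 2) with hm_def
    have hm_pos : ∀ t, 0 < m t := fun t =>
      lt_of_lt_of_le (by linarith) (le_max_right _ _)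
    have hmc : Continuous m := by fun_prop
    set f : ℝ → ℝ := fun t => min (max (2 * t / ε - 1) 0) 1 with hf_def
    have hfc : Continuous f := by fun_prop
    have hf0 : ∀ t, t ≤ ε / 2 → f t = 0 := by
      intro t h
      have h1 : 2 * t / ε - 1 ≤ 0 := by
        rw [sub_nonpos, div_le_one hε]; linarith
      simp [hf_def, max_eq_right h1, min_eq_left (zero_le_one : (0:ℝ) ≤ 1)]
    have hf1 : ∀ t, ε ≤ t → f t = 1 := by
      intro t h
      have h1 : (1:ℝ) ≤ 2 * t / ε - 1 := by
        rw [le_sub_iff_add_le, le_div_iff₀ hε]; linarith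
      have h2 : max (2 * t / ε - 1) 0 = 2 * t / ε - 1 := max_eq_left (by linarith)
      simp only [hf_def]
      rw [h2, min_eq_right h1]
    set g : ℝ → ℝ := fun t => f t / m t with hg_def
    have hgc : Continuous g := hfc.div hmc fun t => (hm_pos t).ne'
    set e : A := cfc f a with he_def
    set b : A := cfc g a with hb_def
    -- memberships
    have he_mem : e ∈ herSet a := by
      apply cfc_mem_herSet a hsa f (fun t => f t / m t ^ 2)
      · exact hfc.div (hmc.pow 2) fun t => pow_ne_zero 2 (hm_pos t).ne'
      · intro t
        rcases le_or_gt t (ε / 2) with h | h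
        · rw [hf0 t h]; simp
        · have hmt : m t = t := max_eq_left h.le
          have ht : t ≠ 0 := by intro h0; rw [h0] at h; linarith
          rw [hmt]; field_simp
    have hb_mem : b ∈ herSet a := by
      apply cfc_mem_herSet a hsa g (fun t => f t / m t ^ 3)
      · exact hfc.div (hmc.pow 3) fun t => pow_ne_zero 3 (hm_pos t).ne'
      · intro t
        rcases le_or_gt t (ε / 2) with h | h
        · rw [hg_def]
          simp only
          rw [hf0 t h]; simp
        · have hmt : m t = t := max_eq_left h.le
          have ht : t ≠ 0 := by intro h0; rw [h0] at h; linarith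
          rw [hg_def]
          simp only
          rw [hmt]; field_simp
    -- a * b = e and b * a = e
    have hab : a * b = e := by
      apply mul_cfc_eq a hsa f g hgc
      intro t
      rcases le_or_gt t (ε / 2) with h | h
      · rw [hg_def]; simp only; rw [hf0 t h]; simp
      · have hmt : m t = t := max_eq_left h.le
        have ht : t ≠ 0 := by intro h0; rw [h0] at h; linarith
        rw [hg_def]; simp only; rw [hmt]; field_simp
    have hba : b * a = e := by
      apply cfc_mul_eq a hsa f g hgc
      intro t
      rcases le_or_gt t (ε / 2) with h | h
      · rw [hg_def]; simp only; rw [hf0 t h]; simp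
      · have hmt : m t = t := max_eq_left h.le
        have ht : t ≠ 0 := by intro h0; rw [h0] at h; linarith
        rw [hg_def]; simp only; rw [hmt]; field_simp
    -- e acts as unit
    have hspec : ∀ t ∈ spectrum ℝ a, f t * t = t := by
      intro t ht
      have h0 : 0 ≤ t := spectrum_nonneg_of_nonneg ha ht
      rcases eq_or_lt_of_le h0 with h | h
      · rw [← h]; simp
      · have : t ∉ Set.Ioo 0 ε := hσ t ht
        have hge : ε ≤ t := by
          by_contra hc
          exact this ⟨h, lt_of_not_ge hc⟩
        rw [hf1 t hge, one_mul]
    have hea : e * a = a := by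
      have h1 : cfc (fun t : ℝ => f t * t) a = cfc f a * cfc (fun t : ℝ => t) a :=
        cfc_mul _ _ a hfc.continuousOn continuous_id.continuousOn
      have h3 : cfc (fun t : ℝ => t) a = a := cfc_id' ℝ a hsa
      calc e * a = cfc (fun t : ℝ => f t * t) a := by rw [he_def, h1, h3]
        _ = cfc (fun t : ℝ => t) a := cfc_congr fun t ht => hspec t ht
        _ = a := h3
    have hae : a * e = a := by
      have h1 : cfc (fun t : ℝ => t * f t) a = cfc (fun t : ℝ => t) a * cfc f a :=
        cfc_mul _ _ a continuous_id.continuousOn hfc.continuousOn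
      have h3 : cfc (fun t : ℝ => t) a = a := cfc_id' ℝ a hsa
      calc a * e = cfc (fun t : ℝ => t * f t) a := by rw [he_def, h1, h3]
        _ = cfc (fun t : ℝ => t) a := cfc_congr fun t ht => by
            rw [mul_comm]; exact hspec t ht
        _ = a := h3
    have hunit : ∀ c ∈ herSet a, e * c = c ∧ c * e = c := by
      have hclosed : IsClosed {x : A | e * x = x ∧ x * e = x} := by
        apply IsClosed.inter
        · exact isClosed_eq (continuous_mul_left e) continuous_id
        · exact isClosed_eq (continuous_mul_right e) continuous_id
      have hgen : {x : A | ∃ y : A, x = a * y * a} ⊆ {x : A | e * x = x ∧ x * e = x} := by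
        rintro x ⟨y, rfl⟩
        constructor
        · rw [← mul_assoc, ← mul_assoc, hea]
        · rw [mul_assoc, hae]
      exact fun c hc => closure_minimal hgen hclosed hc
    exact ⟨e, he_mem, hunit, b, hb_mem, hab, hba⟩
end

section
/- Let A be a unital C*-algebra with nonempty tracial state space T(A) and let p be a projection in A. Suppose that for every projection q ∈ A and every ε > 0 there exists a subprojection q' ≤ q in A with |τ(q') − (1/2)τ(q)| < ε for all τ ∈ T(A). Then for every λ ∈ [0,1] and every ε > 0 there exists a subprojection p' ≤ p with |τ(p') − λ·τ(p)| < ε for all τ ∈ T(A). -/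
open scoped ComplexOrder

/-- The set of tracial states on a unital C*-algebra `A`. -/
def TracialStates (A : Type*) [CStarAlgebra A] : Set (A →ₗ[ℂ] ℂ) :=
  {τ | τ 1 = 1 ∧ (∀ a : A, 0 ≤ τ (star a * a)) ∧ ∀ a b : A, τ (a * b) = τ (b * a)}

section Aux

variable {A : Type*} [CStarAlgebra A] [PartialOrder A] [StarOrderedRing A]

lemma proj_nonneg' {p : A} (hp : IsSelfAdjoint p) (hp2 : p * p = p) : 0 ≤ p := by
  have := star_mul_self_nonneg p
  rwa [hp.star_eq, hp2] at this

/-- For projections `h ≤ q`, `h` commutes with `q` and `h * q = q * h = h`. -/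
lemma proj_mul_of_le {h q : A} (hh : IsSelfAdjoint h) (hh2 : h * h = h)
    (hq : IsSelfAdjoint q) (hq2 : q * q = q) (hle : h ≤ q) :
    h * q = h ∧ q * h = h := by
  have hs : star (1 - q) = 1 - q := by
    rw [star_sub, star_one, hq.star_eq]
  have h1 : star (1 - q) * h * (1 - q) ≤ star (1 - q) * q * (1 - q) :=
    star_left_conjugate_le_conjugate hle (1 - q)
  rw [hs] at h1
  have h2 : (1 - q) * q * (1 - q) = 0 := by
    have : (1 - q) * q = 0 := by rw [sub_mul, one_mul, hq2, sub_self]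
    rw [this, zero_mul]
  rw [h2] at h1
  have heq : star (h * (1 - q)) * (h * (1 - q)) = (1 - q) * h * (1 - q) := by
    rw [star_mul, hs, hh.star_eq, mul_assoc (1 - q) h, ← mul_assoc h h, hh2,
      ← mul_assoc]
  have h3 : (0 : A) ≤ (1 - q) * h * (1 - q) := by
    rw [← heq]; exact star_mul_self_nonneg _
  have h4 : star (h * (1 - q)) * (h * (1 - q)) = 0 := by
    rw [heq]; exact le_antisymm h1 h3
  have h5 : h * (1 - q) = 0 := by
    rwa [CStarRing.star_mul_self_eq_zero_iff] at h4
  have h6 : h * q = h := by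
    have := h5
    rw [mul_sub, mul_one, sub_eq_zero] at this
    exact this.symm
  refine ⟨h6, ?_⟩
  have := congrArg star h6
  rwa [star_mul, hh.star_eq, hq.star_eq] at this

lemma trace_proj_nonneg {τ : A →ₗ[ℂ] ℂ} (hτ : τ ∈ TracialStates A)
    {r : A} (hr : IsSelfAdjoint r) (hr2 : r * r = r) : 0 ≤ τ r := by
  have := hτ.2.1 r
  rwa [hr.star_eq, hr2] at this

lemma trace_proj_norm_le {τ : A →ₗ[ℂ] ℂ} (hτ : τ ∈ TracialStates A)
    {r : A} (hr : IsSelfAdjoint r) (hr2 : r * r = r) : ‖τ r‖ ≤ 1 := by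
  have h0 : 0 ≤ τ r := trace_proj_nonneg hτ hr hr2
  have h1 : 0 ≤ τ (1 - r) := by
    have hsa : IsSelfAdjoint (1 - r) := (IsSelfAdjoint.one (R:=A)).sub hr
    have hsq : (1 - r) * (1 - r) = 1 - r := by
      rw [sub_mul, mul_sub, mul_sub, one_mul, one_mul, mul_one, hr2]; abel
    exact trace_proj_nonneg hτ hsa hsq
  rw [map_sub, hτ.1] at h1
  rw [Complex.le_def] at h0 h1
  simp only [Complex.zero_re, Complex.zero_im, Complex.sub_re, Complex.sub_im,
    Complex.one_re, Complex.one_im] at h0 h1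
  have him : (τ r).im = 0 := h0.2.symm
  have : τ r = ((τ r).re : ℂ) := Complex.ext rfl (by simp [him])
  rw [this, Complex.norm_real, Real.norm_eq_abs, abs_le]
  constructor <;> [linarith [h0.1]; linarith [h1.1]]

lemma ratio_norm_le {k n : ℕ} (hk : k ≤ 2 ^ n) : ‖((k : ℂ) / 2 ^ n)‖ ≤ 1 := by
  rw [norm_div, norm_pow]
  simp only [Complex.norm_natCast, Complex.norm_ofNat]
  rw [div_le_one (by positivity)]
  exact_mod_cast hk

lemma dyadic {A : Type*} [CStarAlgebra A] [PartialOrder A] [StarOrderedRing A]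
    (hhalf : ∀ q : A, IsSelfAdjoint q → q * q = q → ∀ ε : ℝ, 0 < ε →
      ∃ q' : A, IsSelfAdjoint q' ∧ q' * q' = q' ∧ q' ≤ q ∧
        ∀ τ ∈ TracialStates A, ‖τ q' - (1 / 2 : ℂ) * τ q‖ < ε) :
    ∀ n : ℕ, ∀ q : A, IsSelfAdjoint q → q * q = q → ∀ k : ℕ, k ≤ 2 ^ n →
      ∀ ε : ℝ, 0 < ε →
      ∃ q' : A, IsSelfAdjoint q' ∧ q' * q' = q' ∧ q' ≤ q ∧
        ∀ τ ∈ TracialStates A, ‖τ q' - ((k : ℂ) / 2 ^ n) * τ q‖ < ε := by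
  intro n
  induction n with
  | zero =>
    intro q hq hq2 k hk ε hε
    interval_cases k
    · refine ⟨0, IsSelfAdjoint.zero A, by simp, proj_nonneg' hq hq2, ?_⟩
      intro τ hτ
      simpa using hε
    · refine ⟨q, hq, hq2, le_refl q, ?_⟩
      intro τ hτ
      simpa using hε
  | succ n IH =>
    intro q hq hq2 k hk ε hε
    obtain ⟨h, hhsa, hh2, hhle, hhtr⟩ := hhalf q hq hq2 (ε / 4) (by linarith)
    by_cases hk2 : k ≤ 2 ^ n
    · obtain ⟨q', g1, g2, g3, g4⟩ := IH h hhsa hh2 k hk2 (ε / 2) (by linarith)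
      refine ⟨q', g1, g2, g3.trans hhle, ?_⟩
      intro τ hτ
      have e1 := g4 τ hτ
      have e2 := hhtr τ hτ
      have key : τ q' - ((k : ℂ) / 2 ^ (n + 1)) * τ q =
          (τ q' - ((k : ℂ) / 2 ^ n) * τ h) +
            ((k : ℂ) / 2 ^ n) * (τ h - (1 / 2 : ℂ) * τ q) := by
        ring
      rw [key]
      have hb := norm_add_le (τ q' - ((k : ℂ) / 2 ^ n) * τ h)
        (((k : ℂ) / 2 ^ n) * (τ h - (1 / 2 : ℂ) * τ q))
      rw [norm_mul] at hb
      have hc := ratio_norm_le hk2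
      have hd : ‖((k : ℂ) / 2 ^ n)‖ * ‖τ h - (1 / 2 : ℂ) * τ q‖ ≤
          ‖τ h - (1 / 2 : ℂ) * τ q‖ :=
        mul_le_of_le_one_left (norm_nonneg _) hc
      linarith
    · push_neg at hk2
      have hj : k - 2 ^ n ≤ 2 ^ n := by
        have : (2 : ℕ) ^ (n + 1) = 2 ^ n + 2 ^ n := by ring
        omega
      set j := k - 2 ^ n with hjdef
      have hkj : k = 2 ^ n + j := by omega
      have hqh := proj_mul_of_le hhsa hh2 hq hq2 hhle
      set c := q - h with hcdef
      have hcsa : IsSelfAdjoint c := hq.sub hhsa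
      have hc2 : c * c = c := by
        rw [hcdef, sub_mul, mul_sub, mul_sub, hq2, hh2, hqh.1, hqh.2]; abel
      have hcle : c ≤ q := sub_le_self q (proj_nonneg' hhsa hh2)
      obtain ⟨q'', g1, g2, g3, g4⟩ := IH c hcsa hc2 j hj (ε / 2) (by linarith)
      have hcq := proj_mul_of_le g1 g2 hcsa hc2 g3
      have hch : h * c = 0 := by
        rw [hcdef, mul_sub, hqh.1, hh2, sub_self]
      have hhq'' : h * q'' = 0 := by
        rw [← hcq.2, ← mul_assoc, hch, zero_mul]
      have hq''h : q'' * h = 0 := by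
        have := congrArg star hhq''
        rwa [star_mul, g1.star_eq, hhsa.star_eq, star_zero] at this
      refine ⟨h + q'', hhsa.add g1, ?_, ?_, ?_⟩
      · rw [add_mul, mul_add, mul_add, hh2, g2, hhq'', hq''h]; abel
      · rw [← sub_nonneg]
        have : q - (h + q'') = c - q'' := by rw [hcdef]; abel
        rw [this]
        exact sub_nonneg.mpr g3
      · intro τ hτ
        have e1 := hhtr τ hτ
        have e2 := g4 τ hτ
        have hτadd : τ (h + q'') = τ h + τ q'' := map_add τ h q''
        have hτc : τ c = τ q - τ h := map_sub τ q h
        have key : τ (h + q'') - ((k : ℂ) / 2 ^ (n + 1)) * τ q =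
            (τ h - (1 / 2 : ℂ) * τ q) + (τ q'' - ((j : ℂ) / 2 ^ n) * τ c) +
              ((j : ℂ) / 2 ^ n) * ((1 / 2 : ℂ) * τ q - τ h) := by
          rw [hτadd, hτc, hkj]
          push_cast
          field_simp
          ring
        rw [key]
        have hb1 := norm_add_le
          ((τ h - (1 / 2 : ℂ) * τ q) + (τ q'' - ((j : ℂ) / 2 ^ n) * τ c))
          (((j : ℂ) / 2 ^ n) * ((1 / 2 : ℂ) * τ q - τ h))
        have hb2 := norm_add_le (τ h - (1 / 2 : ℂ) * τ q)
          (τ q'' - ((j : ℂ) / 2 ^ n) * τ c)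
        rw [norm_mul] at hb1
        have hc1 := ratio_norm_le hj
        have hd : ‖((j : ℂ) / 2 ^ n)‖ * ‖(1 / 2 : ℂ) * τ q - τ h‖ ≤
            ‖(1 / 2 : ℂ) * τ q - τ h‖ :=
          mul_le_of_le_one_left (norm_nonneg _) hc1
        rw [norm_sub_rev ((1 / 2 : ℂ) * τ q) (τ h)] at hd
        rw [norm_sub_rev ((1 / 2 : ℂ) * τ q) (τ h)] at hb1
        linarith

end Aux

/-- If every projection in `A` can be uniformly approximately halved in
trace by a subprojection, then for every projection `p`, every `λ ∈ [0,1]` and `ε > 0`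
there is a subprojection `p' ≤ p` with `|τ(p') − λ τ(p)| < ε` for all tracial states. -/
theorem stmt6 {A : Type*} [CStarAlgebra A] [PartialOrder A] [StarOrderedRing A]
    (hT : (TracialStates A).Nonempty)
    (hhalf : ∀ q : A, IsSelfAdjoint q → q * q = q → ∀ ε : ℝ, 0 < ε →
      ∃ q' : A, IsSelfAdjoint q' ∧ q' * q' = q' ∧ q' ≤ q ∧
        ∀ τ ∈ TracialStates A, ‖τ q' - (1 / 2 : ℂ) * τ q‖ < ε)
    (p : A) (hp : IsSelfAdjoint p) (hp2 : p * p = p)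
    (lam : ℝ) (hlam : lam ∈ Set.Icc (0 : ℝ) 1) (ε : ℝ) (hε : 0 < ε) :
    ∃ p' : A, IsSelfAdjoint p' ∧ p' * p' = p' ∧ p' ≤ p ∧
      ∀ τ ∈ TracialStates A, ‖τ p' - (lam : ℂ) * τ p‖ < ε := by
  obtain ⟨hlam0, hlam1⟩ := hlam
  obtain ⟨n, hn⟩ : ∃ n : ℕ, (1 / 2 : ℝ) ^ n < ε / 2 :=
    exists_pow_lt_of_lt_one (by linarith) (by norm_num)
  have h2n : (0 : ℝ) < 2 ^ n := by positivity
  set k : ℕ := ⌊lam * 2 ^ n⌋₊ with hkdef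
  have hk_le : (k : ℝ) ≤ lam * 2 ^ n := Nat.floor_le (by positivity)
  have hk_lt : lam * 2 ^ n < k + 1 := Nat.lt_floor_add_one _
  have hkle : k ≤ 2 ^ n := by
    have h1 : (k : ℝ) ≤ (2 : ℝ) ^ n := hk_le.trans (by nlinarith)
    have h2 : ((2 : ℕ) ^ n : ℝ) = (2 : ℝ) ^ n := by push_cast; ring
    exact_mod_cast h2 ▸ h1
  obtain ⟨p', h1, h2, h3, h4⟩ := dyadic hhalf n p hp hp2 k hkle (ε / 2) (by linarith)
  refine ⟨p', h1, h2, h3, ?_⟩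
  intro τ hτ
  have e1 := h4 τ hτ
  have hnp : ‖τ p‖ ≤ 1 := trace_proj_norm_le hτ hp hp2
  have hdist : |(k : ℝ) / 2 ^ n - lam| < ε / 2 := by
    rw [abs_sub_lt_iff]
    constructor
    · have : (k : ℝ) / 2 ^ n ≤ lam := by
        rw [div_le_iff₀ h2n]; exact hk_le
      linarith
    · have hlt : lam - (k : ℝ) / 2 ^ n < 1 / 2 ^ n := by
        rw [sub_lt_iff_lt_add, ← add_div, lt_div_iff₀ h2n]
        linarith
      have : (1 : ℝ) / 2 ^ n = (1 / 2 : ℝ) ^ n := by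
        rw [div_pow, one_pow]
      linarith [this ▸ hlt]
  have key : τ p' - (lam : ℂ) * τ p =
      (τ p' - ((k : ℂ) / 2 ^ n) * τ p) + (((k : ℝ) / 2 ^ n - lam : ℝ) : ℂ) * τ p := by
    push_cast
    ring
  rw [key]
  have hb := norm_add_le (τ p' - ((k : ℂ) / 2 ^ n) * τ p)
    ((((k : ℝ) / 2 ^ n - lam : ℝ) : ℂ) * τ p)
  rw [norm_mul, Complex.norm_real, Real.norm_eq_abs] at hb
  have hd : |(k : ℝ) / 2 ^ n - lam| * ‖τ p‖ ≤ |(k : ℝ) / 2 ^ n - lam| :=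
    mul_le_of_le_one_right (abs_nonneg _) hnp
  linarith
end

section
/- Let A be a unital C*-algebra with nonempty tracial state space T(A). Suppose that for every projection p ∈ A, every λ ∈ [0,1], and every ε > 0 there exists a subprojection p' ≤ p with |τ(p') − λτ(p)| < ε for all τ ∈ T(A). Then for every projection p ∈ A, every n ≥ 1 and every ε > 0 there exist pairwise orthogonal projections p_1, …, p_n ∈ A with p_1 + ⋯ + p_n = p and |τ(p_j) − (1/n)τ(p)| < ε for all τ ∈ T(A) and all j. -/
open scoped ComplexOrder

/-- A projection below another projection is absorbed by it. -/
lemma proj_le_absorb {A : Type*} [CStarAlgebra A] [PartialOrder A] [StarOrderedRing A]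
    {q p : A} (hq : IsSelfAdjoint q) (hq2 : q * q = q)
    (hp : IsSelfAdjoint p) (hp2 : p * p = p) (h : q ≤ p) :
    q * p = q ∧ p * q = q := by
  have hc := star_left_conjugate_le_conjugate h (1 - p)
  have hstar : star ((1 : A) - p) = 1 - p := by
    simp [star_sub, hp.star_eq]
  rw [hstar] at hc
  have hzero : (1 - p) * p * (1 - p) = 0 := by
    have : ((1 : A) - p) * p = 0 := by
      simp [sub_mul, hp2]
    rw [this, zero_mul]
  rw [hzero] at hc
  have hrepr : (1 - p) * q * (1 - p) = star (q * (1 - p)) * (q * (1 - p)) := by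
    rw [star_mul, hstar, hq.star_eq]
    calc (1 - p) * q * (1 - p) = (1 - p) * (q * q) * (1 - p) := by rw [hq2]
      _ = (1 - p) * q * (q * (1 - p)) := by noncomm_ring
  have hnn : (0 : A) ≤ (1 - p) * q * (1 - p) := by
    rw [hrepr]; exact star_mul_self_nonneg _
  have heq : (1 - p) * q * (1 - p) = 0 := le_antisymm hc hnn
  have hqe : q * (1 - p) = 0 := by
    rw [hrepr] at heq
    exact (CStarRing.star_mul_self_eq_zero_iff _).mp heq
  have hqp : q * p = q := by
    have := hqe
    rw [mul_sub, mul_one, sub_eq_zero] at this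
    exact this.symm
  refine ⟨hqp, ?_⟩
  have : star (q * p) = star q := by rw [hqp]
  rwa [star_mul, hp.star_eq, hq.star_eq] at this

lemma stmt7_aux {A : Type*} [CStarAlgebra A] [PartialOrder A] [StarOrderedRing A]
    (hdiv : ∀ q : A, IsSelfAdjoint q → q * q = q → ∀ lam ∈ Set.Icc (0 : ℝ) 1,
      ∀ ε : ℝ, 0 < ε →
      ∃ q' : A, IsSelfAdjoint q' ∧ q' * q' = q' ∧ q' ≤ q ∧
        ∀ τ ∈ TracialStates A, ‖τ q' - (lam : ℂ) * τ q‖ < ε) :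
    ∀ n : ℕ, 1 ≤ n → ∀ p : A, IsSelfAdjoint p → p * p = p → ∀ ε : ℝ, 0 < ε →
    ∃ P : Fin n → A,
      (∀ j, IsSelfAdjoint (P j) ∧ P j * P j = P j) ∧
      (∀ i j, i ≠ j → P i * P j = 0) ∧
      (∑ j, P j = p) ∧
      ∀ j, ∀ τ ∈ TracialStates A, ‖τ (P j) - (1 / (n : ℂ)) * τ p‖ < ε := by
  intro n
  induction n with
  | zero => omega
  | succ k ih =>
    intro _ p hp hp2 ε hε
    rcases Nat.eq_zero_or_pos k with hk | hk
    · subst hk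
      refine ⟨fun _ => p, fun j => ⟨hp, hp2⟩, fun i j hij => absurd (by omega : i = j) hij,
        by simp, fun j τ hτ => ?_⟩
      simp [hε]
    · -- main step
      set δ := ε / 2 with hδdef
      have hδ : 0 < δ := by positivity
      have hlam : (1 : ℝ) / (k + 1) ∈ Set.Icc (0 : ℝ) 1 := by
        constructor
        · positivity
        · rw [div_le_one (by positivity)]
          have : (1 : ℝ) ≤ (k : ℝ) := by exact_mod_cast hk
          linarith
      obtain ⟨q', hq', hq'2, hq'le, hq'tr⟩ := hdiv p hp hp2 _ hlam δ hδ
      obtain ⟨hqp, hpq⟩ := proj_le_absorb hq' hq'2 hp hp2 hq'le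
      set r := p - q' with hrdef
      have hr : IsSelfAdjoint r := hp.sub hq'
      have hr2 : r * r = r := by
        simp only [hrdef, sub_mul, mul_sub, hp2, hq'2, hqp, hpq]
        abel
      obtain ⟨P', hP'proj, hP'orth, hP'sum, hP'tr⟩ := ih hk r hr hr2 δ hδ
      -- each P' j is below r
      have hP'nn : ∀ j, (0 : A) ≤ P' j := by
        intro j
        have : P' j = star (P' j) * P' j := by rw [(hP'proj j).1.star_eq, (hP'proj j).2]
        rw [this]; exact star_mul_self_nonneg _
      have hP'ler : ∀ j, P' j ≤ r := by
        intro j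
        rw [← hP'sum]
        exact Finset.single_le_sum (fun i _ => hP'nn i) (Finset.mem_univ j)
      have hP'r : ∀ j, P' j * r = P' j ∧ r * P' j = P' j := fun j =>
        proj_le_absorb (hP'proj j).1 (hP'proj j).2 hr hr2 (hP'ler j)
      -- orthogonality of q' with the P' j
      have hrq : r * q' = 0 := by
        simp only [hrdef, sub_mul, hq'2, hpq, sub_self]
      have hqr : q' * r = 0 := by
        simp only [hrdef, mul_sub, hq'2, hqp, sub_self]
      have hPq : ∀ j, P' j * q' = 0 := by
        intro j
        rw [← (hP'r j).1, mul_assoc, hrq, mul_zero]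
      have hqP : ∀ j, q' * P' j = 0 := by
        intro j
        rw [← (hP'r j).2, ← mul_assoc, hqr, zero_mul]
      refine ⟨Fin.cons q' P', ?_, ?_, ?_, ?_⟩
      · intro j
        refine Fin.cases ?_ ?_ j
        · exact ⟨hq', hq'2⟩
        · intro i; simpa using hP'proj i
      · intro i j hij
        induction i using Fin.cases with
        | zero =>
          induction j using Fin.cases with
          | zero => exact absurd rfl hij
          | succ j' => simpa using hqP j'
        | succ i' =>
          induction j using Fin.cases with
          | zero => simpa using hPq i'
          | succ j' =>
            have hne : i' ≠ j' := fun h => hij (by rw [h])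
            simpa using hP'orth i' j' hne
      · rw [Fin.sum_cons, hP'sum, hrdef]; abel
      · intro j τ hτ
        have hbound2 : ‖τ r - ((k : ℂ) / (k + 1)) * τ p‖ < δ := by
          have := hq'tr τ hτ
          have hτr : τ r = τ p - τ q' := by rw [hrdef, map_sub]
          have hrw : τ r - ((k : ℂ) / (k + 1)) * τ p
              = -(τ q' - (((1 : ℝ) / (k + 1) : ℝ) : ℂ) * τ p) := by
            rw [hτr]
            push_cast
            have hk1 : ((k : ℂ) + 1) ≠ 0 := by
              exact_mod_cast (Nat.cast_add_one_ne_zero k : ((k : ℂ) + 1) ≠ 0)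
            field_simp
            ring
          rw [hrw, norm_neg]
          exact this
        refine Fin.cases ?_ ?_ j
        · -- j = 0 : the projection q'
          simp only [Fin.cons_zero]
          have := hq'tr τ hτ
          have hrw : (((1 : ℝ) / (k + 1) : ℝ) : ℂ) = 1 / ((k : ℕ) + 1 : ℂ) := by push_cast; ring
          rw [hrw] at this
          calc ‖τ q' - 1 / ((k + 1 : ℕ) : ℂ) * τ p‖
              = ‖τ q' - 1 / ((k : ℕ) + 1 : ℂ) * τ p‖ := by push_cast; ring_nf
            _ < δ := this
            _ < ε := by rw [hδdef]; linarith
        · intro i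
          simp only [Fin.cons_succ]
          have h1 := hP'tr i τ hτ
          have hkc : ((k : ℂ)) ≠ 0 := by exact_mod_cast hk.ne'
          have hk1 : ((k : ℂ) + 1) ≠ 0 :=
            (Nat.cast_add_one_ne_zero k : ((k : ℂ) + 1) ≠ 0)
          have key : (1 / (k : ℂ)) * τ r - (1 / ((k : ℂ) + 1)) * τ p
              = (1 / (k : ℂ)) * (τ r - ((k : ℂ) / (k + 1)) * τ p) := by
            field_simp
          have h2 : ‖(1 / (k : ℂ)) * τ r - (1 / ((k : ℂ) + 1)) * τ p‖ < δ := by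
            rw [key, norm_mul]
            have hnorm : ‖(1 / (k : ℂ))‖ = 1 / (k : ℝ) := by
              rw [norm_div, norm_one, Complex.norm_natCast]
            rw [hnorm]
            have hkR : (1 : ℝ) ≤ (k : ℝ) := by exact_mod_cast hk
            have h3 : (1 / (k : ℝ)) * ‖τ r - ((k : ℂ) / (k + 1)) * τ p‖ ≤
                1 * ‖τ r - ((k : ℂ) / (k + 1)) * τ p‖ := by
              apply mul_le_mul_of_nonneg_right _ (norm_nonneg _)
              rw [div_le_one (by linarith)]; linarith
            calc (1 / (k : ℝ)) * ‖τ r - ((k : ℂ) / (k + 1)) * τ p‖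
                ≤ 1 * ‖τ r - ((k : ℂ) / (k + 1)) * τ p‖ := h3
              _ < 1 * δ := by rw [one_mul, one_mul]; exact hbound2
              _ = δ := one_mul δ
          calc ‖τ (P' i) - 1 / ((k + 1 : ℕ) : ℂ) * τ p‖
              = ‖(τ (P' i) - (1 / (k : ℂ)) * τ r)
                + ((1 / (k : ℂ)) * τ r - (1 / ((k : ℂ) + 1)) * τ p)‖ := by
                push_cast; ring_nf
            _ ≤ ‖τ (P' i) - (1 / (k : ℂ)) * τ r‖
                + ‖(1 / (k : ℂ)) * τ r - (1 / ((k : ℂ) + 1)) * τ p‖ := norm_add_le _ _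
            _ < δ + δ := add_lt_add h1 h2
            _ = ε := by rw [hδdef]; ring

/-- If every projection admits subprojections of any prescribed tracial
proportion `λ ∈ [0,1]` (up to `ε`, uniformly over traces), then every projection `p`
can be partitioned into `n` pairwise orthogonal projections, each of trace uniformly
approximately `(1/n) τ(p)`. -/
theorem stmt7 {A : Type*} [CStarAlgebra A] [PartialOrder A] [StarOrderedRing A]
    (hT : (TracialStates A).Nonempty)
    (hdiv : ∀ q : A, IsSelfAdjoint q → q * q = q → ∀ lam ∈ Set.Icc (0 : ℝ) 1,
      ∀ ε : ℝ, 0 < ε →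
      ∃ q' : A, IsSelfAdjoint q' ∧ q' * q' = q' ∧ q' ≤ q ∧
        ∀ τ ∈ TracialStates A, ‖τ q' - (lam : ℂ) * τ q‖ < ε)
    (p : A) (hp : IsSelfAdjoint p) (hp2 : p * p = p)
    (n : ℕ) (hn : 1 ≤ n) (ε : ℝ) (hε : 0 < ε) :
    ∃ P : Fin n → A,
      (∀ j, IsSelfAdjoint (P j) ∧ P j * P j = P j) ∧
      (∀ i j, i ≠ j → P i * P j = 0) ∧
      (∑ j, P j = p) ∧
      ∀ j, ∀ τ ∈ TracialStates A, ‖τ (P j) - (1 / (n : ℂ)) * τ p‖ < ε := by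
  exact stmt7_aux hdiv n hn p hp hp2 ε hε
end

section
/- Let K be a Choquet simplex, f : K → ℝ an upper semicontinuous affine function, and g : K → ℝ a lower semicontinuous affine function with f(κ) < g(κ) for all κ ∈ K. Then there exists a continuous affine function h : K → ℝ with f(κ) < h(κ) < g(κ) for all κ ∈ K. -/
open Topology Filter


variable {E : Type*} [AddCommGroup E] [Module ℝ E] [TopologicalSpace E]
  [IsTopologicalAddGroup E] [ContinuousSMul ℝ E]

/-- The cone in `E × ℝ` with base `K` at height `1`. `K` is a Choquet simplex
precisely when this cone induces a lattice order. -/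
def simplexCone (K : Set E) : Set (E × ℝ) :=
  {c | ∃ r : ℝ, 0 ≤ r ∧ ∃ x ∈ K, c = (r • x, r)}

/-- `K` is a Choquet simplex: the ordering on `E × ℝ` induced by the cone with base
`K` is a lattice ordering (any two elements have a least upper bound). -/
def IsChoquetSimplex (K : Set E) : Prop :=
  ∀ a b : E × ℝ, ∃ m : E × ℝ,
    m - a ∈ simplexCone K ∧ m - b ∈ simplexCone K ∧
    ∀ c : E × ℝ, c - a ∈ simplexCone K → c - b ∈ simplexCone K →
      c - m ∈ simplexCone K

/-- A real-valued function is affine on the convex set `K`. -/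
def AffineOn (K : Set E) (f : E → ℝ) : Prop :=
  ∀ x ∈ K, ∀ y ∈ K, ∀ t : ℝ, t ∈ Set.Icc (0 : ℝ) 1 →
    f (t • x + (1 - t) • y) = t * f x + (1 - t) * f y

/-- On a Choquet simplex `K`, if `f` is upper semicontinuous affine,
`g` lower semicontinuous affine, and `f < g` on `K`, then there is a continuous
affine `h` with `f < h < g` on `K`. -/
theorem stmt11 [LocallyConvexSpace ℝ E]
    (K : Set E) (hKcp : IsCompact K) (hKcv : Convex ℝ K)
    (hK : IsChoquetSimplex K)
    (f g : E → ℝ)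
    (hf_usc : UpperSemicontinuousOn f K) (hf_aff : AffineOn K f)
    (hg_lsc : LowerSemicontinuousOn g K) (hg_aff : AffineOn K g)
    (hfg : ∀ κ ∈ K, f κ < g κ) :
    ∃ h : E → ℝ, ContinuousOn h K ∧ AffineOn K h ∧
      ∀ κ ∈ K, f κ < h κ ∧ h κ < g κ := by
  rcases K.eq_empty_or_nonempty with hKe | ⟨x₀, hx₀⟩
  · refine ⟨fun _ => 0, continuousOn_const, ?_, ?_⟩
    · intro x hx; rw [hKe] at hx; exact absurd hx (Set.notMem_empty x)
    · intro x hx; rw [hKe] at hx; exact absurd hx (Set.notMem_empty x)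
  -- Step 1: local estimates
  have key : ∀ a ∈ K, ∃ δ : ℝ, 0 < δ ∧ ∃ O ∈ 𝓝 (0:E),
      f a - g a + 3*δ ≤ 0 ∧ ∀ u ∈ O, ∀ v ∈ O, a + u + v ∈ K →
        f (a + u + v) < f a + δ ∧ g a - δ < g (a + u + v) := by
    intro a ha
    set δ := (g a - f a)/3 with hδdef
    have hfa := hfg a ha
    have hδpos : 0 < δ := by rw [hδdef]; linarith
    have h1 : ∀ᶠ z in nhdsWithin a K, f z < f a + δ := hf_usc a ha _ (by linarith)
    have h2 : ∀ᶠ z in nhdsWithin a K, g a - δ < g z := hg_lsc a ha _ (by linarith)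
    have h3 := h1.and h2
    rw [eventually_nhdsWithin_iff] at h3
    obtain ⟨V, hV, hVp⟩ := h3.exists_mem
    have hc : ContinuousAt (fun p : E × E => a + p.1 + p.2) ((0:E), (0:E)) := by fun_prop
    have hpre : (fun p : E × E => a + p.1 + p.2) ⁻¹' V ∈ 𝓝 ((0:E), (0:E)) :=
      hc.preimage_mem_nhds (by simpa using hV)
    rw [mem_nhds_prod_iff] at hpre
    obtain ⟨O₁, hO₁, O₂, hO₂, hsub⟩ := hpre
    refine ⟨δ, hδpos, O₁ ∩ O₂, Filter.inter_mem hO₁ hO₂, by rw [hδdef]; linarith, ?_⟩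
    intro u hu v hv hKm
    have hmem : (u, v) ∈ O₁ ×ˢ O₂ := ⟨hu.1, hv.2⟩
    exact hVp _ (hsub hmem) hKm
  choose δ hδpos O hO hδ3 hprop using key
  -- Step 2: compactness / Lebesgue-number style uniform estimate
  obtain ⟨t, ht⟩ := hKcp.elim_nhds_subcover' (fun a ha => (fun z => z - a) ⁻¹' O a ha)
    (fun a ha => by
      have hca : ContinuousAt (fun z : E => z - a) a := by fun_prop
      exact hca.preimage_mem_nhds (by simpa using hO a ha))
  have htne : t.Nonempty := by
    rcases Set.mem_iUnion₂.mp (ht hx₀) with ⟨a, hat, _⟩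
    exact ⟨a, hat⟩
  set Ufin : Set E := ⋂ a ∈ t, (O a.1 a.2 ∩ -(O a.1 a.2)) with hUfindef
  have hUmem : Ufin ∈ 𝓝 (0:E) := by
    rw [hUfindef, Filter.biInter_finset_mem]
    intro a hat
    refine Filter.inter_mem (hO _ _) ?_
    have : Neg.neg ⁻¹' (O a.1 a.2) ∈ 𝓝 (0:E) :=
      (continuous_neg.continuousAt (x := (0:E))).preimage_mem_nhds (by simpa using hO a.1 a.2)
    convert this using 1
    ext z; simp [Set.mem_neg]
  set ε : ℝ := t.inf' htne (fun a => δ a.1 a.2) with hεdef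
  have hεpos : 0 < ε := by
    rw [hεdef, Finset.lt_inf'_iff]
    exact fun a _ => hδpos a.1 a.2
  have claim : ∀ x ∈ K, ∀ y ∈ K, x - y ∈ Ufin → f x - g y < -ε := by
    intro x hx y hy hxy
    rcases Set.mem_iUnion₂.mp (ht hx) with ⟨a, hat, hxa⟩
    have hxa' : x - a.1 ∈ O a.1 a.2 := hxa
    have hUa : x - y ∈ O a.1 a.2 ∩ -(O a.1 a.2) := Set.mem_iInter₂.mp hxy a hat
    have h0 : (0:E) ∈ O a.1 a.2 := mem_of_mem_nhds (hO _ _)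
    have hyx : y - x ∈ O a.1 a.2 := by
      have h2 := hUa.2
      rw [Set.mem_neg] at h2
      simpa [neg_sub] using h2
    have hxform : a.1 + (x - a.1) + 0 = x := by abel
    have hyform : a.1 + (x - a.1) + (y - x) = y := by abel
    have hx' := hprop a.1 a.2 (x - a.1) hxa' 0 h0 (by rw [hxform]; exact hx)
    have hy' := hprop a.1 a.2 (x - a.1) hxa' (y - x) hyx (by rw [hyform]; exact hy)
    rw [hxform] at hx'
    rw [hyform] at hy'
    have hεle : ε ≤ δ a.1 a.2 := by
      rw [hεdef]; exact Finset.inf'_le _ hat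
    have h1 := hx'.1
    have h2 := hy'.2
    have h3 := hδ3 a.1 a.2
    linarith
  -- Step 3: the convex set S
  set S : Set (E × ℝ) := {p | ∃ x ∈ K, ∃ y ∈ K, p.1 = x - y ∧ p.2 ≤ f x - g y} with hSdef
  have hSconv : Convex ℝ S := by
    rintro p ⟨x₁, hx₁, y₁, hy₁, hp1, hp2⟩ q ⟨x₂, hx₂, y₂, hy₂, hq1, hq2⟩ a b ha hb hab
    have hb' : b = 1 - a := by linarith
    subst hb'
    have ha1 : a ≤ 1 := by linarith
    have hfx := hf_aff x₁ hx₁ x₂ hx₂ a ⟨ha, ha1⟩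
    have hgy := hg_aff y₁ hy₁ y₂ hy₂ a ⟨ha, ha1⟩
    refine ⟨a • x₁ + (1-a) • x₂, hKcv hx₁ hx₂ ha (by linarith) hab,
           a • y₁ + (1-a) • y₂, hKcv hy₁ hy₂ ha (by linarith) hab, ?_, ?_⟩
    · show (a • p + (1-a) • q).1 = _
      simp only [Prod.fst_add, Prod.smul_fst]
      rw [hp1, hq1]; module
    · show (a • p + (1-a) • q).2 ≤ _
      simp only [Prod.snd_add, Prod.smul_snd, smul_eq_mul]
      rw [hfx, hgy]
      have h1 : a * p.2 ≤ a * (f x₁ - g y₁) := mul_le_mul_of_nonneg_left hp2 ha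
      have h2 : (1-a) * q.2 ≤ (1-a) * (f x₂ - g y₂) :=
        mul_le_mul_of_nonneg_left hq2 (by linarith)
      nlinarith [h1, h2]
  -- Step 4: 0 ∉ closure S
  have hW : ((0:E), (0:ℝ)) ∉ closure S := by
    rw [mem_closure_iff_nhds]
    push_neg
    refine ⟨Ufin ×ˢ Set.Ioi (-ε), prod_mem_nhds hUmem (Ioi_mem_nhds (by linarith)), ?_⟩
    rw [Set.eq_empty_iff_forall_notMem]
    rintro ⟨v, u⟩ ⟨⟨hvU, huI⟩, x, hx, y, hy, hv, hu⟩
    have hfin : f x - g y < -ε := claim x hx y hy (by rw [← hv]; exact hvU)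
    have : -ε < u := huI
    linarith
  -- Step 5: Hahn-Banach separation
  obtain ⟨l, c, hlc, hc0⟩ := geometric_hahn_banach_closed_point hSconv.closure isClosed_closure hW
  have hc : c < 0 := by have h0 := l.map_zero; rw [← h0]; exact hc0
  set φ : E → ℝ := fun x => l (x, 0) with hφdef
  set α : ℝ := l ((0:E), (1:ℝ)) with hαdef
  have hφ0 : φ (0:E) = 0 := by
    rw [hφdef]; exact l.map_zero
  have hldecomp : ∀ (x : E) (u : ℝ), l (x, u) = φ x + u * α := by
    intro x u
    have hxu : ((x, u) : E × ℝ) = (x, (0:ℝ)) + u • ((0:E), (1:ℝ)) := by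
      simp [Prod.ext_iff]
    rw [hxu, map_add, map_smul]
    simp [hφdef, hαdef, smul_eq_mul]
  have hlS : ∀ p ∈ S, l p < c := fun p hp => hlc p (subset_closure hp)
  have hmemS : ∀ x ∈ K, ∀ y ∈ K, ((x - y, f x - g y) : E × ℝ) ∈ S :=
    fun x hx y hy => ⟨x, hx, y, hy, rfl, le_refl _⟩
  have hα0 : 0 ≤ α := by
    by_contra hneg
    push_neg at hneg
    set u : ℝ := min (f x₀ - g x₀) (c / α) with hudef
    have huS : (((0:E), u) : E × ℝ) ∈ S := ⟨x₀, hx₀, x₀, hx₀, by simp, min_le_left _ _⟩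
    have hlt := hlS _ huS
    rw [hldecomp, hφ0] at hlt
    have h1 : u ≤ c / α := min_le_right _ _
    have h2 : (c/α) * α ≤ u * α := mul_le_mul_of_nonpos_right h1 (le_of_lt hneg)
    have h3 : (c/α) * α = c := div_mul_cancel₀ c hneg.ne
    linarith
  have hαpos : 0 < α := by
    rcases hα0.lt_or_eq with h | h
    · exact h
    · exfalso
      have huS : (((0:E), f x₀ - g x₀) : E × ℝ) ∈ S := ⟨x₀, hx₀, x₀, hx₀, by simp, le_refl _⟩
      have hlt := hlS _ huS
      rw [hldecomp, hφ0, ← h] at hlt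
      simp at hlt
      linarith
  have hφsub : ∀ x y : E, φ (x - y) = φ x - φ y := by
    intro x y
    have hxy : ((x - y, (0:ℝ)) : E × ℝ) = (x, (0:ℝ)) - (y, 0) := by
      simp [Prod.ext_iff]
    rw [hφdef]
    show l (x - y, 0) = l (x, 0) - l (y, 0)
    rw [hxy, map_sub]
  have hxyineq : ∀ x ∈ K, ∀ y ∈ K, φ x + α * f x < φ y + α * g y + c := by
    intro x hx y hy
    have hlt := hlS _ (hmemS x hx y hy)
    rw [hldecomp, hφsub] at hlt
    nlinarith [hlt]
  -- Step 6: construction of h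
  set Φ : E → ℝ := fun x => φ x + α * f x with hΦdef
  have hbdd : BddAbove (Φ '' K) := by
    refine ⟨φ x₀ + α * g x₀ + c, ?_⟩
    rintro _ ⟨x, hx, rfl⟩
    exact le_of_lt (hxyineq x hx x₀ hx₀)
  set M := sSup (Φ '' K) with hMdef
  have hMub : ∀ x ∈ K, Φ x ≤ M := fun x hx => le_csSup hbdd ⟨x, hx, rfl⟩
  have hMle : ∀ y ∈ K, M ≤ φ y + α * g y + c := by
    intro y hy
    refine csSup_le ⟨Φ x₀, x₀, hx₀, rfl⟩ ?_
    rintro _ ⟨x, hx, rfl⟩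
    exact (hxyineq x hx y hy).le
  have hφc : Continuous φ := l.continuous.comp (continuous_id.prodMk continuous_const)
  have hαne : α ≠ 0 := hαpos.ne'
  refine ⟨fun z => (M - c/2 - φ z) / α, ?_, ?_, ?_⟩
  · exact ((continuous_const.sub hφc).div_const α).continuousOn
  · intro x hx y hy s hs
    have hφaff : φ (s • x + (1-s) • y) = s * φ x + (1-s) * φ y := by
      have hxy : ((s • x + (1-s) • y, (0:ℝ)) : E × ℝ)
          = s • (x, (0:ℝ)) + (1-s) • (y, 0) := by
        simp [Prod.ext_iff]
      rw [hφdef]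
      show l (s • x + (1-s) • y, 0) = _
      rw [hxy, map_add, map_smul, map_smul]
      simp [smul_eq_mul]
    simp only
    rw [hφaff]
    field_simp
    ring
  · intro κ hκ
    have h1 := hMub κ hκ
    have h2 := hMle κ hκ
    rw [hΦdef] at h1
    simp only at h1 ⊢
    constructor
    · rw [lt_div_iff₀ hαpos]
      nlinarith [h1]
    · rw [div_lt_iff₀ hαpos]
      nlinarith [h2]
end

section
/- Let A be a C*-algebra, D ⊂ A a commutative C*-subalgebra, and Φ : A → D a hereditary positive linear map (meaning a ∈ her(Φ(a)) for all positive a ∈ A). Then for every n ≥ 1 the map Φ ⊗ E_n : A ⊗ M_n → D ⊗ D_n is hereditary, where E_n : M_n → D_n is the canonical conditional expectation onto the diagonal matrices. -/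
open Filter Topology

/-- The hereditary subalgebra generated by an element, as a set (norm/topological
closure of `d ∙ B ∙ d`). -/
def herSet' {B : Type*} [NonUnitalRing B] [TopologicalSpace B] (d : B) : Set B :=
  closure {x : B | ∃ y : B, x = d * y * d}

section Key
variable {A : Type*} [CStarAlgebra A] [PartialOrder A] [StarOrderedRing A]

lemma leftIdeal_mem (d c : A) {x : A}
    (hx : x ∈ closure {x : A | ∃ y, x = y * d}) :
    c * x ∈ closure {x : A | ∃ y, x = y * d} := by
  refine map_mem_closure (continuous_mul_left c) hx ?_
  rintro _ ⟨y, rfl⟩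
  exact ⟨c * y, (mul_assoc c y d).symm⟩

lemma key {d m b : A} (hmL : m ∈ closure {x : A | ∃ y, x = y * d})
    (hb : star b * b ≤ m) :
    b ∈ closure {x : A | ∃ y, x = y * d} := by
  set L := closure {x : A | ∃ y, x = y * d} with hL
  have hm : 0 ≤ m := le_trans (star_mul_self_nonneg b) hb
  have hmsa : IsSelfAdjoint m := .of_nonneg hm
  have hspec : ∀ t ∈ spectrum ℝ m, 0 ≤ t := fun t ht => spectrum_nonneg_of_nonneg hm ht
  have main : ∀ k : ℕ, ∃ z ∈ L, ‖b - z‖ ≤ Real.sqrt (1/(4*((k:ℝ)+1))) := by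
    intro k
    set K : ℝ := (k : ℝ) + 1 with hKdef
    have hKpos : (0:ℝ) < K := by positivity
    have hden : ∀ t ∈ spectrum ℝ m, 1 + K * t ≠ 0 := by
      intro t ht
      have := hspec t ht
      positivity
    have hcontw : ContinuousOn (fun t : ℝ => K / (1 + K * t)) (spectrum ℝ m) :=
      ContinuousOn.div continuousOn_const (Continuous.continuousOn (by fun_prop)) hden
    have hconte : ContinuousOn (fun t : ℝ => 1 / (1 + K * t)) (spectrum ℝ m) :=
      ContinuousOn.div continuousOn_const (Continuous.continuousOn (by fun_prop)) hden
    have hcontu : ContinuousOn (fun t : ℝ => (K / (1 + K * t)) * t) (spectrum ℝ m) :=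
      hcontw.mul continuousOn_id
    set w := cfc (fun t : ℝ => K / (1 + K * t)) m with hw
    set u := cfc (fun t : ℝ => (K / (1 + K * t)) * t) m with hu
    set e := cfc (fun t : ℝ => 1 / (1 + K * t)) m with he
    have huwm : u = w * m := by
      rw [hu, hw, cfc_mul (fun t : ℝ => K / (1 + K * t)) (fun t : ℝ => t) m hcontw
        continuousOn_id, cfc_id' ℝ m hmsa]
    have hesa : IsSelfAdjoint e := cfc_predicate _ m
    have hone : (1 : A) = cfc (fun _ : ℝ => (1:ℝ)) m := by
      rw [cfc_const (1:ℝ) m hmsa, map_one]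
    have h1u : 1 - u = e := by
      rw [hu, he, hone, ← cfc_sub (fun _ : ℝ => (1:ℝ)) (fun t : ℝ => K / (1 + K * t) * t) m
        continuousOn_const hcontu]
      apply cfc_congr
      intro t ht
      have h1 := hden t ht
      field_simp
      ring
    have h1 : b - b * u = b * e := by rw [← h1u, mul_sub, mul_one]
    have h2 : star (b * e) * (b * e) = e * (star b * b) * e := by
      rw [star_mul, hesa.star_eq]
      noncomm_ring
    have h3 : e * (star b * b) * e ≤ e * m * e := by
      have := star_left_conjugate_le_conjugate hb e
      rwa [hesa.star_eq] at this
    have h4 : e * m * e = cfc (fun t : ℝ => (1 / (1 + K * t)) * t * (1 / (1 + K * t))) m := by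
      symm
      rw [cfc_mul (fun t : ℝ => (1 / (1 + K * t)) * t) (fun t : ℝ => 1 / (1 + K * t)) m
          (hconte.mul continuousOn_id) hconte,
        cfc_mul (fun t : ℝ => 1 / (1 + K * t)) (fun t : ℝ => t) m hconte continuousOn_id,
        cfc_id' ℝ m hmsa]
    have h5 : ‖cfc (fun t : ℝ => (1 / (1 + K * t)) * t * (1 / (1 + K * t))) m‖ ≤ 1/(4*K) := by
      apply norm_cfc_le (by positivity)
      intro t ht
      have ht0 := hspec t ht
      have hs : (0:ℝ) < 1 + K * t := by positivity
      rw [Real.norm_eq_abs, abs_of_nonneg (mul_nonneg (mul_nonneg (by positivity) ht0)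
        (by positivity))]
      have heq : (1/(1+K*t)) * t * (1/(1+K*t)) = t/((1+K*t)*(1+K*t)) := by
        rw [one_div_mul_eq_div, div_mul_div_comm, mul_one]
      rw [heq, div_le_div_iff₀ (by positivity) (by positivity)]
      nlinarith [sq_nonneg (1 - K*t)]
    have hnorm : ‖b - b * u‖^2 ≤ 1/(4*K) := by
      calc ‖b - b * u‖^2 = ‖star (b * e) * (b * e)‖ := by
            rw [h1, CStarRing.norm_star_mul_self, sq]
        _ = ‖e * (star b * b) * e‖ := by rw [h2]
        _ ≤ ‖e * m * e‖ := CStarAlgebra.norm_le_norm_of_nonneg_of_le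
              (h2 ▸ star_mul_self_nonneg (b * e)) h3
        _ ≤ 1/(4*K) := h4 ▸ h5
    refine ⟨b * u, ?_, ?_⟩
    · rw [huwm, ← mul_assoc]
      exact leftIdeal_mem d (b * w) hmL
    · rw [← Real.sqrt_sq (norm_nonneg (b - b * u))]
      exact Real.sqrt_le_sqrt hnorm
  have hlim : Tendsto (fun k : ℕ => Real.sqrt (1/(4*((k:ℝ)+1)))) atTop (𝓝 0) := by
    have h1 : Tendsto (fun k : ℕ => 1/(4*((k:ℝ)+1))) atTop (𝓝 0) := by
      have h2 := tendsto_one_div_add_atTop_nhds_zero_nat.const_mul (1/4 : ℝ)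
      rw [mul_zero] at h2
      exact h2.congr fun k => by rw [div_mul_div_comm, one_mul, mul_add, mul_one]
    have h3 := (Real.continuous_sqrt.tendsto 0).comp h1
    rw [Real.sqrt_zero] at h3
    exact h3
  have hmem : b ∈ closure L := by
    rw [Metric.mem_closure_iff]
    intro ε hε
    obtain ⟨k, hk⟩ := (hlim.eventually (gt_mem_nhds hε)).exists
    obtain ⟨z, hzL, hbz⟩ := main k
    exact ⟨z, hzL, by rw [dist_eq_norm]; exact lt_of_le_of_lt hbz hk⟩
  rwa [hL, closure_closure] at hmem

end Key

/-- If `D ⊂ A` is a commutative C*-subalgebra and `Φ : A → D` is a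
hereditary positive linear map, then for every `n ≥ 1` the map
`Φ ⊗ E_n : A ⊗ M_n → D ⊗ D_n`, sending a matrix `M` over `A` to the diagonal matrix
with entries `Φ (M i i)`, is hereditary: every positive matrix `M` (i.e. `M = yᴴy`)
lies in the hereditary subalgebra of `M_n(A)` generated by its image. -/
theorem stmt12 {A : Type*} [CStarAlgebra A] [PartialOrder A] [StarOrderedRing A]
    (D : StarSubalgebra ℂ A)
    (hcomm : ∀ x ∈ D, ∀ y ∈ D, x * y = y * x)
    (Φ : A →ₗ[ℂ] A)
    (hrange : ∀ x : A, Φ x ∈ D)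
    (hpos : ∀ x : A, 0 ≤ x → 0 ≤ Φ x)
    (hher : ∀ a : A, 0 ≤ a → a ∈ herSet' (Φ a))
    (n : ℕ) (hn : 1 ≤ n)
    (M : Matrix (Fin n) (Fin n) A)
    (hM : ∃ y : Matrix (Fin n) (Fin n) A, M = y.conjTranspose * y) :
    M ∈ herSet' (Matrix.diagonal fun i => Φ (M i i)) := by
  obtain ⟨y, hMy⟩ := hM
  have hentry : ∀ i j, M i j = ∑ k, star (y k i) * (y k j) := by
    intro i j
    rw [hMy]
    simp [Matrix.mul_apply, Matrix.conjTranspose_apply]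
  have hMii : ∀ i, 0 ≤ M i i := by
    intro i
    rw [hentry]
    exact Finset.sum_nonneg fun k _ => star_mul_self_nonneg _
  set d : Fin n → A := fun i => Φ (M i i) with hd
  have hdpos : ∀ i, 0 ≤ d i := fun i => hpos _ (hMii i)
  have hdsa : ∀ i, IsSelfAdjoint (d i) := fun i => .of_nonneg (hdpos i)
  have hcol : ∀ i k, y k i ∈ closure {x : A | ∃ z, x = z * d i} := by
    intro i k
    apply key (m := M i i)
    · have h1 : M i i ∈ herSet' (d i) := hher _ (hMii i)
      refine closure_mono ?_ h1
      rintro _ ⟨z, rfl⟩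
      exact ⟨d i * z, rfl⟩
    · rw [hentry i i, ← Finset.add_sum_erase Finset.univ
        (fun k => star (y k i) * (y k i)) (Finset.mem_univ k)]
      exact le_add_of_nonneg_right (Finset.sum_nonneg fun _ _ => star_mul_self_nonneg _)
  have hrow : ∀ i k, star (y k i) ∈ closure {x : A | ∃ z, x = d i * z} := by
    intro i k
    refine map_mem_closure continuous_star (hcol i k) ?_
    rintro _ ⟨z, rfl⟩
    exact ⟨star z, by rw [star_mul, (hdsa i).star_eq]⟩
  have hij : ∀ i j, M i j ∈ closure {x : A | ∃ z, x = d i * z * d j} := by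
    intro i j
    have hterm : ∀ k, star (y k i) * (y k j) ∈ closure {x : A | ∃ z, x = d i * z * d j} := by
      intro k
      refine map_mem_closure₂ continuous_mul (hrow i k) (hcol j k) ?_
      rintro _ ⟨z, rfl⟩ _ ⟨z', rfl⟩
      exact ⟨z * z', by rw [mul_assoc, mul_assoc, mul_assoc]⟩
    have hsum : ∀ s : Finset (Fin n),
        (∑ k ∈ s, star (y k i) * (y k j)) ∈ closure {x : A | ∃ z, x = d i * z * d j} := by
      intro s
      induction s using Finset.induction with
      | empty =>
        rw [Finset.sum_empty]
        exact subset_closure ⟨0, by simp⟩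
      | insert k s hk ih =>
        rw [Finset.sum_insert hk]
        refine map_mem_closure₂ continuous_add (hterm _) ih ?_
        rintro _ ⟨z, rfl⟩ _ ⟨z', rfl⟩
        exact ⟨z + z', by rw [mul_add, add_mul]⟩
    rw [hentry]
    exact hsum Finset.univ
  rw [herSet']
  have hset : {X : Matrix (Fin n) (Fin n) A |
      ∃ Y, X = Matrix.diagonal d * Y * Matrix.diagonal d} =
      Set.pi Set.univ (fun i => Set.pi Set.univ
        (fun j => {x : A | ∃ z, x = d i * z * d j})) := by
    ext X
    constructor
    · rintro ⟨Y, rfl⟩ i _ j _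
      exact ⟨Y i j, by simp [Matrix.mul_diagonal, Matrix.diagonal_mul]⟩
    · intro hX
      choose Z hZ using fun i j => hX i (Set.mem_univ i) j (Set.mem_univ j)
      refine ⟨Matrix.of Z, ?_⟩
      ext i j
      rw [Matrix.mul_diagonal, Matrix.diagonal_mul]
      exact hZ i j
  rw [hset]
  suffices h : (M : Fin n → Fin n → A) ∈ closure (Set.pi Set.univ fun i => Set.pi Set.univ
      fun j => {x : A | ∃ z, x = d i * z * d j}) by exact h
  rw [closure_pi_set]
  intro i _
  show M i ∈ closure (Set.univ.pi fun j => {x : A | ∃ z, x = d i * z * d j})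
  rw [closure_pi_set]
  intro j _
  exact hij i j
end

section
/- Let A be a C*-algebra, D ⊂ A a commutative C*-subalgebra, n ≥ 1, and let d = Σ_{i=1}^n d_i ⊗ e_{ii} ∈ D ⊗ D_n with each d_i ∈ D positive. Then the hereditary C*-subalgebra of A ⊗ M_n generated by d equals the closed linear span of the sets {a ⊗ e_{ij} : a ∈ closure(d_i A d_j)} over all 1 ≤ i, j ≤ n. -/
/-- For a diagonal matrix `d = Σ d_i ⊗ e_{ii}` over a commutative
C*-subalgebra `D ⊂ A` with `d_i ≥ 0`, the hereditary subalgebra of `M_n(A)`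
generated by `d` is the closed linear span of the matrices `a ⊗ e_{ij}` with
`a ∈ closure (d_i A d_j)`. -/
theorem stmt13 {A : Type*} [CStarAlgebra A] [PartialOrder A] [StarOrderedRing A]
    (D : StarSubalgebra ℂ A)
    (hcomm : ∀ x ∈ D, ∀ y ∈ D, x * y = y * x)
    (n : ℕ) (hn : 1 ≤ n)
    (dv : Fin n → A) (hdD : ∀ i, dv i ∈ D) (hdpos : ∀ i, 0 ≤ dv i) :
    herSet' (Matrix.diagonal dv) =
      closure (Submodule.span ℂ
        {M : Matrix (Fin n) (Fin n) A | ∃ (i j : Fin n) (a : A),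
          a ∈ closure {z : A | ∃ y : A, z = dv i * y * dv j} ∧
          M = Matrix.single i j a} : Set (Matrix (Fin n) (Fin n) A)) := by
  classical
  set d : Matrix (Fin n) (Fin n) A := Matrix.diagonal dv with hd
  set S : Set (Matrix (Fin n) (Fin n) A) :=
    {x : Matrix (Fin n) (Fin n) A | ∃ y, x = d * y * d} with hS
  set gen : Set (Matrix (Fin n) (Fin n) A) :=
    {M : Matrix (Fin n) (Fin n) A | ∃ (i j : Fin n) (a : A),
      a ∈ closure {z : A | ∃ y : A, z = dv i * y * dv j} ∧
      M = Matrix.single i j a} with hgenS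
  have hentry : ∀ (y : Matrix (Fin n) (Fin n) A) (k l : Fin n),
      (d * y * d) k l = dv k * y k l * dv l := by
    intro y k l
    simp [hd, Matrix.diagonal_mul, Matrix.mul_diagonal]
  -- the linear map y ↦ d * y * d
  let g : Matrix (Fin n) (Fin n) A →ₗ[ℂ] Matrix (Fin n) (Fin n) A :=
    (LinearMap.mulRight ℂ d).comp (LinearMap.mulLeft ℂ d)
  have hSet : S = ↑(LinearMap.range g) := by
    ext x
    simp [hS, g, eq_comm, mul_assoc]
  -- identity: d * stdBasisMatrix i j y * d = stdBasisMatrix i j (dv i * y * dv j)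
  have hstd : ∀ (i j : Fin n) (y : A),
      d * Matrix.single i j y * d
        = Matrix.single i j (dv i * y * dv j) := by
    intro i j y
    ext k l
    rw [hentry]
    simp only [Matrix.single, Matrix.of_apply]
    by_cases h1 : i = k <;> by_cases h2 : j = l <;> simp [h1, h2]
  -- continuity of stdBasisMatrix
  have hcont : ∀ (i j : Fin n), Continuous (fun a : A => Matrix.single i j a) := by
    intro i j
    apply continuous_pi; intro k
    apply continuous_pi; intro l
    simp only [Matrix.single, Matrix.of_apply]
    by_cases h1 : i = k <;> by_cases h2 : j = l <;> simp [h1, h2] <;>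
      first | exact continuous_id | exact continuous_const
  have hgen : gen ⊆ closure S := by
    rintro M ⟨i, j, a, ha, rfl⟩
    have himg : (fun a : A => Matrix.single i j a) ''
        {z : A | ∃ y : A, z = dv i * y * dv j} ⊆ S := by
      rintro _ ⟨z, ⟨y, rfl⟩, rfl⟩
      exact ⟨Matrix.single i j y, (hstd i j y).symm⟩
    have h1 : Matrix.single i j a ∈
        closure ((fun a : A => Matrix.single i j a) ''
          {z : A | ∃ y : A, z = dv i * y * dv j}) := by
      apply image_closure_subset_closure_image (hcont i j)
      exact Set.mem_image_of_mem _ ha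
    exact closure_mono himg h1
  -- d * y * d as a sum of stdBasisMatrices
  have hsum : ∀ y : Matrix (Fin n) (Fin n) A,
      d * y * d = ∑ i : Fin n, ∑ j : Fin n,
        Matrix.single i j (dv i * (y i j) * dv j) := by
    intro y
    ext k l
    rw [hentry]
    simp [Matrix.sum_apply, Matrix.single, ite_and, Finset.sum_ite_eq,
      Finset.sum_ite_eq']
  unfold herSet'
  rw [← hS]
  apply subset_antisymm
  · apply closure_minimal _ isClosed_closure
    intro x hx
    obtain ⟨y, rfl⟩ := hx
    apply subset_closure
    rw [hsum y]
    apply Submodule.sum_mem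
    intro i _
    apply Submodule.sum_mem
    intro j _
    apply Submodule.subset_span
    exact ⟨i, j, _, subset_closure ⟨y i j, rfl⟩, rfl⟩
  · apply closure_minimal _ isClosed_closure
    have hT : (Submodule.span ℂ gen : Submodule ℂ (Matrix (Fin n) (Fin n) A))
        ≤ (LinearMap.range g).topologicalClosure := by
      rw [Submodule.span_le]
      intro x hx
      have := hgen hx
      rwa [hSet] at this
    intro x hx
    have h2 := hT hx
    rw [hSet, ← Submodule.topologicalClosure_coe]
    exact h2
end
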